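/- arXiv:1102.3760 — 4 statements merged into one kernel-verified Lean document; each statement's English description precedes it below -/
import Mathlib

section
/- Let G be a graph and a, b, c three distinct vertices of G. Then either G contains a K_3-minor rooted at a, b, c (three pairwise-disjoint pairwise-adjacent connected subgraphs containing a, b, c respectively), or there exists a vertex v of G such that at most one of a, b, c lies in each connected component of G - v. -/
open SimpleGraph

variable {V : Type*}

/-- Branch-set definition of an `H`-minor in `G`. -/
def HasGraphMinor {W : Type*} (G : SimpleGraph V) (H : SimpleGraph W) : Prop :=
  ∃ B : W → Set V,
    (∀ w, (B w).Nonempty) ∧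
    (∀ w, (G.induce (B w)).Connected) ∧
    (Pairwise fun w w' => Disjoint (B w) (B w')) ∧
    ∀ ⦃w w'⦄, H.Adj w w' → ∃ x ∈ B w, ∃ y ∈ B w', G.Adj x y

/-- `A,B,C,D` are the branch sets of a `K₄`-minor rooted at `a,b,c,d`. -/
def RootedK4MinorOn (G : SimpleGraph V) (a b c d : V) (A B C D : Set V) : Prop :=
    a ∈ A ∧ b ∈ B ∧ c ∈ C ∧ d ∈ D ∧
    (G.induce A).Connected ∧ (G.induce B).Connected ∧
    (G.induce C).Connected ∧ (G.induce D).Connected ∧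
    Disjoint A B ∧ Disjoint A C ∧ Disjoint A D ∧
    Disjoint B C ∧ Disjoint B D ∧ Disjoint C D ∧
    (∃ x ∈ A, ∃ y ∈ B, G.Adj x y) ∧ (∃ x ∈ A, ∃ y ∈ C, G.Adj x y) ∧
    (∃ x ∈ A, ∃ y ∈ D, G.Adj x y) ∧ (∃ x ∈ B, ∃ y ∈ C, G.Adj x y) ∧
    (∃ x ∈ B, ∃ y ∈ D, G.Adj x y) ∧ (∃ x ∈ C, ∃ y ∈ D, G.Adj x y)

/-- A `K₄`-minor rooted at `a,b,c,d`. -/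
def RootedK4Minor (G : SimpleGraph V) (a b c d : V) : Prop :=
  ∃ A B C D : Set V, RootedK4MinorOn G a b c d A B C D

/-- A `K₃`-minor rooted at `a,b,c`. -/
def RootedK3Minor (G : SimpleGraph V) (a b c : V) : Prop :=
  ∃ A B C : Set V,
    a ∈ A ∧ b ∈ B ∧ c ∈ C ∧
    (G.induce A).Connected ∧ (G.induce B).Connected ∧ (G.induce C).Connected ∧
    Disjoint A B ∧ Disjoint A C ∧ Disjoint B C ∧
    (∃ x ∈ A, ∃ y ∈ B, G.Adj x y) ∧ (∃ x ∈ A, ∃ y ∈ C, G.Adj x y) ∧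
    (∃ x ∈ B, ∃ y ∈ C, G.Adj x y)

/-- Add a new apex vertex adjacent to every vertex of `s`. -/
def Apex (G : SimpleGraph V) (s : Set V) : SimpleGraph (Option V) where
  Adj x y :=
    (∃ u v, x = some u ∧ y = some v ∧ G.Adj u v) ∨
    (∃ u, x = some u ∧ y = none ∧ u ∈ s) ∨
    (∃ v, x = none ∧ y = some v ∧ v ∈ s)
  symm := by
    constructor
    rintro x y (⟨u, v, rfl, rfl, h⟩ | ⟨u, rfl, rfl, h⟩ | ⟨v, rfl, rfl, h⟩)
    · exact Or.inl ⟨v, u, rfl, rfl, h.symm⟩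
    · exact Or.inr (Or.inr ⟨u, rfl, rfl, h⟩)
    · exact Or.inr (Or.inl ⟨v, rfl, rfl, h⟩)
  loopless := by
    constructor
    rintro x (⟨u, v, rfl, h, hadj⟩ | ⟨u, rfl, h, _⟩ | ⟨v, h, rfl, _⟩)
    · rw [Option.some_inj] at h; subst h; exact hadj.ne rfl
    · cases h
    · cases h

/-- Planarity, via Wagner's theorem: no `K₅`-minor and no `K₃,₃`-minor. -/
def IsPlanar (G : SimpleGraph V) : Prop :=
  ¬ HasGraphMinor G (⊤ : SimpleGraph (Fin 5)) ∧
  ¬ HasGraphMinor G (completeBipartiteGraph (Fin 3) (Fin 3))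

/-- `G` is `k`-connected: more than `k` vertices, and deleting fewer than `k`
vertices leaves a connected graph. -/
def KConnected (k : ℕ) (G : SimpleGraph V) : Prop :=
  k < Nat.card V ∧ ∀ S : Set V, S.Finite → S.ncard < k → (G.induce Sᶜ).Connected

/-- An `(s₁t₁,s₂t₂)`-linkage: an `s₁t₁`-path and an `s₂t₂`-path that are disjoint. -/
def Linkage (G : SimpleGraph V) (s₁ t₁ s₂ t₂ : V) : Prop :=
  ∃ (P : G.Walk s₁ t₁) (Q : G.Walk s₂ t₂),
    P.IsPath ∧ Q.IsPath ∧ P.support.Disjoint Q.support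

/-- `G` is obtained from its induced subgraph on `S` by attaching, to each triangle,
a (possibly empty) clique: `t x` records the triangle of the clique containing `x ∉ S`. -/
def CliqueExpansion (G : SimpleGraph V) (S : Set V) (t : V → Finset V) : Prop :=
  ∀ x ∉ S, ↑(t x) ⊆ S ∧ (t x).card = 3 ∧
    (∀ y ∈ t x, ∀ z ∈ t x, y ≠ z → G.Adj y z) ∧
    (∀ y, G.Adj x y ↔ (y ∈ t x ∨ (y ∉ S ∧ y ≠ x ∧ t y = t x)))

/-- `H` is a planar graph with outerface cycle `(p,q,r,s)`, every internal face a
triangle, and every triangle a face.  (Combinatorial surrogate: `p,q,r,s` bound a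
common face — witnessed by planarity of the graph with an apex added adjacent to
them — the edge count of a near-triangulation of a quadrilateral, and no
separating triangle.) -/
def IsQuadTriangulation {U : Type*} (H : SimpleGraph U) (p q r s : U) : Prop :=
  p ≠ q ∧ p ≠ r ∧ p ≠ s ∧ q ≠ r ∧ q ≠ s ∧ r ≠ s ∧
  H.Adj p q ∧ H.Adj q r ∧ H.Adj r s ∧ H.Adj s p ∧
  IsPlanar H ∧ IsPlanar (Apex H {p, q, r, s}) ∧
  H.edgeSet.ncard + 7 = 3 * Nat.card U ∧
  ∀ T : Finset U, T.card = 3 → (∀ x ∈ T, ∀ y ∈ T, x ≠ y → H.Adj x y) →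
    (((↑T)ᶜ : Set U) = ∅ ∨ (H.induce (↑T)ᶜ).Connected)

/-- `W` is an `(a,b,c,d)`-web. -/
def IsWeb (W : SimpleGraph V) (a b c d : V) : Prop :=
  ∃ (S : Set V) (ha : a ∈ S) (hb : b ∈ S) (hc : c ∈ S) (hd : d ∈ S),
    IsQuadTriangulation (W.induce S) ⟨a, ha⟩ ⟨b, hb⟩ ⟨c, hc⟩ ⟨d, hd⟩ ∧
    ∃ t, CliqueExpansion W S t

/-- `W` is an `{a,b,c,d}`-web, i.e. an `(a',b',c',d')`-web for some ordering. -/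
def IsUnorderedWeb (W : SimpleGraph V) (a b c d : V) : Prop :=
  ∃ p q r s : V, ({p, q, r, s} : Set V) = {a, b, c, d} ∧ IsWeb W p q r s

/-- A separation `(A, B)` of `G` (given by the vertex sets of the two sides). -/
def IsSeparation (G : SimpleGraph V) (A B : Set V) : Prop :=
  A ∪ B = Set.univ ∧
  (∀ ⦃x y⦄, G.Adj x y → (x ∈ A ∧ y ∈ A) ∨ (x ∈ B ∧ y ∈ B)) ∧
  (A \ B).Nonempty ∧ (B \ A).Nonempty

/-! ### Auxiliary lemmas for STATEMENT 0 -/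

/-- Map a walk in an induced subgraph back to `G`, keeping track of support. -/
lemma aux_reachable_walk {G : SimpleGraph V} {s : Set V} {x y : s}
    (h : (G.induce s).Reachable x y) :
    ∃ w : G.Walk x.1 y.1, ∀ z ∈ w.support, z ∈ s := by
  obtain ⟨w⟩ := h
  refine ⟨w.map ⟨Subtype.val, fun h => h⟩, ?_⟩
  intro z hz
  rw [Walk.support_map, List.mem_map] at hz
  obtain ⟨⟨z', hz'⟩, _, rfl⟩ := hz
  exact hz'

/-- First-hit extraction: the initial segment of a walk up to the first vertex in `t`. -/
lemma aux_first_hit {G : SimpleGraph V} :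
    ∀ {u v : V} (w : G.Walk u v) (t : Set V), v ∈ t →
    ∃ (m : V) (w₁ : G.Walk u m), m ∈ t ∧ (∀ z ∈ w₁.support, z ∈ w.support) ∧
      (∀ z ∈ w₁.support, z ∈ t → z = m) := by
  intro u v w
  induction w with
  | nil => intro t ht; exact ⟨_, Walk.nil, ht, by simp, by simp⟩
  | @cons u u' v h w ih =>
    intro t ht
    by_cases hu : u ∈ t
    · exact ⟨u, Walk.nil, hu, by simp, by simp⟩
    · obtain ⟨m, w₁, hm, hsub, hfirst⟩ := ih t ht
      refine ⟨m, Walk.cons h w₁, hm, ?_, ?_⟩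
      · intro z hz
        rw [Walk.support_cons, List.mem_cons] at hz ⊢
        exact hz.imp id fun h' => hsub z h'
      · intro z hz hzt
        rw [Walk.support_cons, List.mem_cons] at hz
        rcases hz with rfl | hz
        · exact absurd hzt hu
        · exact hfirst z hz hzt

/-- Crossing extraction: an initial segment avoiding `t`, whose last vertex has a
neighbour in `t`. -/
lemma aux_cross {G : SimpleGraph V} :
    ∀ {u v : V} (w : G.Walk u v) (t : Set V), v ∈ t → u ∉ t →
    ∃ (p y : V) (S : G.Walk u p), y ∈ t ∧ G.Adj p y ∧
      (∀ z ∈ S.support, z ∈ w.support) ∧ (∀ z ∈ S.support, z ∉ t) := by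
  intro u v w
  induction w with
  | nil => intro t ht hu; exact absurd ht hu
  | @cons u u' v h w ih =>
    intro t ht hu
    by_cases hu' : u' ∈ t
    · exact ⟨u, u', Walk.nil, hu', h, by simp, by simpa using hu⟩
    · obtain ⟨p, y, S, hy, hadj, hsub, havoid⟩ := ih t ht hu'
      refine ⟨p, y, Walk.cons h S, hy, hadj, ?_, ?_⟩
      · intro z hz
        rw [Walk.support_cons, List.mem_cons] at hz ⊢
        exact hz.imp id fun h' => hsub z h'
      · intro z hz
        rw [Walk.support_cons, List.mem_cons] at hz
        rcases hz with rfl | hz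
        · exact hu
        · exact havoid z hz

/-- For a path, the two pieces of a split meet only in the split vertex. -/
lemma aux_take_drop [DecidableEq V] {G : SimpleGraph V} {u v y : V} {p : G.Walk u v}
    (hp : p.IsPath) (h : y ∈ p.support) :
    ∀ z, z ∈ (p.takeUntil y h).support → z ∈ (p.dropUntil y h).support → z = y := by
  intro z hzt hzd
  have hspec := p.take_spec h
  have hnd : p.support.Nodup := hp.support_nodup
  rw [← hspec, Walk.support_append] at hnd
  have hdisj := List.disjoint_of_nodup_append hnd
  rw [Walk.support_eq_cons (p.dropUntil y h), List.mem_cons] at hzd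
  rcases hzd with rfl | hzd
  · rfl
  · exact absurd hzd (hdisj hzt)

lemma rootedK3_swap_bc {G : SimpleGraph V} {a b c : V} (h : RootedK3Minor G a c b) :
    RootedK3Minor G a b c := by
  obtain ⟨A, C, B, ha, hc, hb, cA, cC, cB, dAC, dAB, dCB, eAC, eAB, eCB⟩ := h
  exact ⟨A, B, C, ha, hb, hc, cA, cB, cC, dAB, dAC, dCB.symm,
    eAB, eAC, by obtain ⟨x, hx, y, hy, hxy⟩ := eCB; exact ⟨y, hy, x, hx, hxy.symm⟩⟩

lemma rootedK3_rot {G : SimpleGraph V} {a b c : V} (h : RootedK3Minor G b c a) :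
    RootedK3Minor G a b c := by
  obtain ⟨B, C, A, hb, hc, ha, cB, cC, cA, dBC, dBA, dCA, eBC, eBA, eCA⟩ := h
  refine ⟨A, B, C, ha, hb, hc, cA, cB, cC, dBA.symm, dCA.symm, dBC, ?_, ?_, eBC⟩
  · obtain ⟨x, hx, y, hy, hxy⟩ := eBA; exact ⟨y, hy, x, hx, hxy.symm⟩
  · obtain ⟨x, hx, y, hy, hxy⟩ := eCA; exact ⟨y, hy, x, hx, hxy.symm⟩

/-- The tripod lemma: a tripod with centre `m` and legs to `a`, `b`, `c`, together
with an `a`–`b` walk avoiding `m`, yields a rooted `K₃`-minor. -/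
lemma aux_tripod {G : SimpleGraph V} {m a b c : V} (hma : m ≠ a) (hmb : m ≠ b)
    (La : G.Walk m a) (Lb : G.Walk m b) (Lc : G.Walk m c)
    (pLa : La.IsPath) (pLb : Lb.IsPath) (pLc : Lc.IsPath)
    (hAB : ∀ z ∈ La.support, z ∈ Lb.support → z = m)
    (hAC : ∀ z ∈ La.support, z ∈ Lc.support → z = m)
    (hBC : ∀ z ∈ Lb.support, z ∈ Lc.support → z = m)
    (R : G.Walk a b) (hR : m ∉ R.support) :
    RootedK3Minor G a b c := by
  classical
  obtain ⟨a₁, h₁, La', rfl⟩ := Walk.exists_eq_cons_of_ne hma La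
  obtain ⟨b₁, h₂, Lb', rfl⟩ := Walk.exists_eq_cons_of_ne hmb Lb
  rw [Walk.cons_isPath_iff] at pLa pLb
  obtain ⟨pLa', hmA⟩ := pLa
  obtain ⟨pLb', hmB⟩ := pLb
  set Astar : Set V := {z | z ∈ La'.support} with hAstar
  set Bstar : Set V := {z | z ∈ Lb'.support} with hBstar
  set Cstar : Set V := {z | z ∈ Lc.support} with hCstar
  have haA : a ∈ Astar := La'.end_mem_support
  have hbB : b ∈ Bstar := Lb'.end_mem_support
  have hcC : c ∈ Cstar := Lc.end_mem_support
  have hmC : m ∈ Cstar := Lc.start_mem_support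
  have hsubA : ∀ z ∈ La'.support, z ∈ (Walk.cons h₁ La').support := by
    intro z hz; rw [Walk.support_cons]; exact List.mem_cons_of_mem _ hz
  have hsubB : ∀ z ∈ Lb'.support, z ∈ (Walk.cons h₂ Lb').support := by
    intro z hz; rw [Walk.support_cons]; exact List.mem_cons_of_mem _ hz
  have hAB' : ∀ z, z ∈ Astar → z ∈ Bstar → False := by
    intro z hz hz'
    have := hAB z (hsubA z hz) (hsubB z hz')
    subst this; exact hmA hz
  have hAC' : ∀ z, z ∈ Astar → z ∈ Cstar → False := by
    intro z hz hz'
    have := hAC z (hsubA z hz) hz'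
    subst this; exact hmA hz
  have hBC' : ∀ z, z ∈ Bstar → z ∈ Cstar → False := by
    intro z hz hz'
    have := hBC z (hsubB z hz) hz'
    subst this; exact hmB hz
  set t : Set V := Bstar ∪ (Cstar \ {m}) with ht
  have hbt : b ∈ t := Or.inl hbB
  have hat : a ∉ t := by
    rintro (h | ⟨h, -⟩)
    · exact hAB' a haA h
    · exact hAC' a haA h
  obtain ⟨p, y, S, hy, hadj, hsubR, havoid⟩ := aux_cross R t hbt hat
  have hmS : m ∉ {z | z ∈ S.support} := fun hz => hR (hsubR m hz)
  have hSC : ∀ z, z ∈ S.support → z ∈ Cstar → False := by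
    intro z hz hzc
    by_cases hzm : z = m
    · exact hmS (hzm ▸ hz)
    · exact havoid z hz (Or.inr ⟨hzc, hzm⟩)
  have hSB : ∀ z, z ∈ S.support → z ∈ Bstar → False := fun z hz hzb =>
    havoid z hz (Or.inl hzb)
  set A : Set V := Astar ∪ {z | z ∈ S.support} with hA
  have haAfull : a ∈ A := Or.inl haA
  have connA : (G.induce A).Connected := by
    refine induce_union_connected (Walk.connected_induce_support La').preconnected
      (Walk.connected_induce_support S).preconnected ⟨a, haA, S.start_mem_support⟩
  have hedgeAC : ∃ x ∈ A, ∃ y' ∈ Cstar, G.Adj x y' :=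
    ⟨a₁, Or.inl La'.start_mem_support, m, hmC, h₁.symm⟩
  rcases hy with hyB | ⟨hyC, hyne⟩
  · -- y lands in Bstar
    refine ⟨A, Bstar, Cstar, haAfull, hbB, hcC, connA,
      Walk.connected_induce_support Lb', Walk.connected_induce_support Lc,
      ?_, ?_, ?_, ?_, hedgeAC, ?_⟩
    · rw [Set.disjoint_left]
      rintro z (hz | hz) hz'
      · exact hAB' z hz hz'
      · exact hSB z hz hz'
    · rw [Set.disjoint_left]
      rintro z (hz | hz) hz'
      · exact hAC' z hz hz'
      · exact hSC z hz hz'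
    · rw [Set.disjoint_left]; exact fun z hz hz' => hBC' z hz hz'
    · exact ⟨p, Or.inr S.end_mem_support, y, hyB, hadj⟩
    · exact ⟨b₁, Lb'.start_mem_support, m, hmC, h₂.symm⟩
  · -- y lands in Cstar \ {m}
    have hyLc : y ∈ Lc.support := hyC
    set q := Lc.takeUntil y hyLc with hq
    set d := Lc.dropUntil y hyLc with hd
    have pq : q.IsPath := pLc.takeUntil hyLc
    have htd := aux_take_drop pLc hyLc
    obtain ⟨q₁, h₃, W, hWeq⟩ := Walk.exists_eq_cons_of_ne hyne q.reverse
    have pqrev : q.reverse.IsPath := pq.reverse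
    rw [hWeq, Walk.cons_isPath_iff] at pqrev
    obtain ⟨pW, hyW⟩ := pqrev
    have hWq : ∀ z ∈ W.support, z ∈ q.support := by
      intro z hz
      have : z ∈ q.reverse.support := by
        rw [hWeq, Walk.support_cons]; exact List.mem_cons_of_mem _ hz
      rwa [Walk.support_reverse, List.mem_reverse] at this
    have hWLc : ∀ z ∈ W.support, z ∈ Lc.support := fun z hz =>
      Lc.support_takeUntil_subset hyLc (hWq z hz)
    have hdLc : ∀ z ∈ d.support, z ∈ Lc.support := fun z hz =>
      Lc.support_dropUntil_subset hyLc hz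
    have hmW : m ∈ {z | z ∈ W.support} := W.end_mem_support
    set B' : Set V := Bstar ∪ {z | z ∈ W.support} with hB'
    set C' : Set V := {z | z ∈ d.support} with hC'
    have connB' : (G.induce B').Connected :=
      connected_induce_union (Walk.connected_induce_support Lb').preconnected
        (Walk.connected_induce_support W).preconnected Lb'.start_mem_support hmW h₂.symm
    refine ⟨A, B', C', haAfull, Or.inl hbB, d.end_mem_support, connA, connB',
      Walk.connected_induce_support d, ?_, ?_, ?_, ?_, ?_, ?_⟩
    · rw [Set.disjoint_left]
      rintro z (hz | hz) (hz' | hz')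
      · exact hAB' z hz hz'
      · exact hAC' z hz (hWLc z hz')
      · exact hSB z hz hz'
      · exact hSC z hz (hWLc z hz')
    · rw [Set.disjoint_left]
      rintro z (hz | hz) hz'
      · exact hAC' z hz (hdLc z hz')
      · exact hSC z hz (hdLc z hz')
    · rw [Set.disjoint_left]
      rintro z (hz | hz) hz'
      · exact hBC' z hz (hdLc z hz')
      · exact hyW (by have := htd z (hWq z hz) hz'; rwa [this] at hz)
    · exact ⟨a₁, Or.inl La'.start_mem_support, m, Or.inr hmW, h₁.symm⟩
    · exact ⟨p, Or.inr S.end_mem_support, y, d.start_mem_support, hadj⟩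
    · exact ⟨q₁, Or.inr W.start_mem_support, y, d.start_mem_support, h₃.symm⟩

/-- either `G` has a `K₃`-minor rooted at distinct `a,b,c`, or some
vertex `v` is such that at most one of `a,b,c` lies in each component of `G - v`. -/
theorem rooted_K3_minor_or_cutvertex (G : SimpleGraph V) (a b c : V)
    (hab : a ≠ b) (hac : a ≠ c) (hbc : b ≠ c) :
    RootedK3Minor G a b c ∨
    ∃ v : V, ∀ x ∈ ({a, b, c} : Set V), ∀ y ∈ ({a, b, c} : Set V), x ≠ y →
      ∀ (hx : x ∈ ({v}ᶜ : Set V)) (hy : y ∈ ({v}ᶜ : Set V)),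
        ¬ (G.induce ({v}ᶜ : Set V)).Reachable ⟨x, hx⟩ ⟨y, hy⟩ := by
  classical
  by_cases hsep : ∃ v : V, ∀ x ∈ ({a, b, c} : Set V), ∀ y ∈ ({a, b, c} : Set V), x ≠ y →
      ∀ (hx : x ∈ ({v}ᶜ : Set V)) (hy : y ∈ ({v}ᶜ : Set V)),
        ¬ (G.induce ({v}ᶜ : Set V)).Reachable ⟨x, hx⟩ ⟨y, hy⟩
  · exact Or.inr hsep
  left
  push_neg at hsep
  -- For each `v`, one of the three pairs is joined by a walk avoiding `v`.
  have key : ∀ v : V,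
      (∃ w : G.Walk a b, ∀ z ∈ w.support, z ≠ v) ∨
      (∃ w : G.Walk a c, ∀ z ∈ w.support, z ≠ v) ∨
      (∃ w : G.Walk b c, ∀ z ∈ w.support, z ≠ v) := by
    intro v
    obtain ⟨x, hxS, y, hyS, hxy, hx, hy, hr⟩ := hsep v
    obtain ⟨w, hw⟩ := aux_reachable_walk hr
    have hw' : ∀ z ∈ w.support, z ≠ v := fun z hz =>
      Set.mem_compl_singleton_iff.mp (hw z hz)
    have hrev : ∀ z ∈ w.reverse.support, z ≠ v := fun z hz =>
      hw' z (by rwa [Walk.support_reverse, List.mem_reverse] at hz)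
    simp only [Set.mem_insert_iff, Set.mem_singleton_iff] at hxS hyS
    rcases hxS with rfl | rfl | rfl <;> rcases hyS with rfl | rfl | rfl
    · exact absurd rfl hxy
    · exact Or.inl ⟨w, hw'⟩
    · exact Or.inr (Or.inl ⟨w, hw'⟩)
    · exact Or.inl ⟨w.reverse, hrev⟩
    · exact absurd rfl hxy
    · exact Or.inr (Or.inr ⟨w, hw'⟩)
    · exact Or.inr (Or.inl ⟨w.reverse, hrev⟩)
    · exact Or.inr (Or.inr ⟨w.reverse, hrev⟩)
    · exact absurd rfl hxy
  -- A path from `a` to `b` avoiding `c`.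
  obtain ⟨P₀, hP₀⟩ : ∃ w : G.Walk a b, ∀ z ∈ w.support, z ≠ c := by
    rcases key c with h | ⟨w, hw⟩ | ⟨w, hw⟩
    · exact h
    · exact absurd rfl (hw c w.end_mem_support)
    · exact absurd rfl (hw c w.end_mem_support)
  -- A walk from `a` to `c` avoiding `b`.
  obtain ⟨Q₀, hQ₀⟩ : ∃ w : G.Walk a c, ∀ z ∈ w.support, z ≠ b := by
    rcases key b with ⟨w, hw⟩ | h | ⟨w, hw⟩
    · exact absurd rfl (hw b w.end_mem_support)
    · exact h
    · exact absurd rfl (hw b w.start_mem_support)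
  set P := P₀.bypass with hPdef
  have hPp : P.IsPath := P₀.bypass_isPath
  have hcP : c ∉ P.support := fun h => hP₀ c (P₀.support_bypass_subset h) rfl
  -- the tripod centre `m`: first vertex of the reversed `Q₀` lying on `P`
  obtain ⟨m, Lc'', hm, hsubQ, hfirst⟩ :=
    aux_first_hit Q₀.reverse {z | z ∈ P.support} P.start_mem_support
  have hmP : m ∈ P.support := hm
  set Lc : G.Walk m c := Lc''.bypass.reverse with hLcdef
  have pLc : Lc.IsPath := Lc''.bypass_isPath.reverse
  have hLcP : ∀ z ∈ Lc.support, z ∈ P.support → z = m := by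
    intro z hz hzP
    have hz' : z ∈ Lc''.bypass.support := by
      rwa [hLcdef, Walk.support_reverse, List.mem_reverse] at hz
    exact hfirst z (Lc''.support_bypass_subset hz') hzP
  have hmc : m ≠ c := fun h => hcP (h ▸ hmP)
  have hmb : m ≠ b := by
    have : m ∈ Q₀.support := by
      have := hsubQ m Lc''.end_mem_support
      rwa [Walk.support_reverse, List.mem_reverse] at this
    exact fun h => hQ₀ m this h
  set La : G.Walk m a := (P.takeUntil m hmP).reverse with hLadef
  set Lb : G.Walk m b := P.dropUntil m hmP with hLbdef
  have pLa : La.IsPath := (hPp.takeUntil hmP).reverse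
  have pLb : Lb.IsPath := hPp.dropUntil hmP
  have htd := aux_take_drop hPp hmP
  have hLaP : ∀ z ∈ La.support, z ∈ P.support := by
    intro z hz
    rw [hLadef, Walk.support_reverse, List.mem_reverse] at hz
    exact P.support_takeUntil_subset hmP hz
  have hLbP : ∀ z ∈ Lb.support, z ∈ P.support := fun z hz =>
    P.support_dropUntil_subset hmP hz
  have hALb : ∀ z ∈ La.support, z ∈ Lb.support → z = m := by
    intro z hz hz'
    rw [hLadef, Walk.support_reverse, List.mem_reverse] at hz
    exact htd z hz hz'
  have hALc : ∀ z ∈ La.support, z ∈ Lc.support → z = m := fun z hz hz' =>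
    hLcP z hz' (hLaP z hz)
  have hBLc : ∀ z ∈ Lb.support, z ∈ Lc.support → z = m := fun z hz hz' =>
    hLcP z hz' (hLbP z hz)
  rcases key m with ⟨R, hR⟩ | ⟨R, hR⟩ | ⟨R, hR⟩
  · exact aux_tripod (hR a R.start_mem_support).symm hmb La Lb Lc pLa pLb pLc
      hALb hALc hBLc R (fun h => hR m h rfl)
  · exact rootedK3_swap_bc (aux_tripod (hR a R.start_mem_support).symm hmc La Lc Lb
      pLa pLc pLb hALc hALb (fun z hz hz' => hBLc z hz' hz) R (fun h => hR m h rfl))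
  · exact rootedK3_rot (aux_tripod hmb hmc Lb Lc La pLb pLc pLa hBLc
      (fun z hz hz' => hALb z hz' hz) (fun z hz hz' => hALc z hz' hz) R
      (fun h => hR m h rfl))
end

section
/- Let G be a connected graph that is a spanning subgraph of an (a,b,c,d)-web, and suppose G contains a K_4-minor rooted at a,b,c,d in which every vertex of G lies in some branch set. Then contracting each edge with both endpoints in the same branch set yields K_4 as an outerplanar graph, a contradiction; hence no such rooted K_4-minor exists. -/
open SimpleGraph

variable {V : Type*}

private def Rg (W : SimpleGraph V) (P : Set V) : SimpleGraph V where
  Adj u v := u ∈ P ∧ v ∈ P ∧ W.Adj u v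
  symm := ⟨fun u v h => ⟨h.2.1, h.1, h.2.2.symm⟩⟩
  loopless := ⟨fun u h => W.loopless.irrefl u h.2.2⟩

private lemma rg_reach_induce {W : SimpleGraph V} {P : Set V} :
    ∀ {u v : V}, (Rg W P).Walk u v → ∀ (hu : u ∈ P) (hv : v ∈ P),
      (W.induce P).Reachable ⟨u, hu⟩ ⟨v, hv⟩ := by
  intro u v p
  induction p with
  | nil => intro hu hv; exact Reachable.refl _
  | @cons u w v h q ih =>
    intro hu hv
    have hadj : (W.induce P).Adj ⟨u, hu⟩ ⟨w, h.2.1⟩ := h.2.2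
    exact hadj.reachable.trans (ih h.2.1 hv)

private lemma rg_connected {W : SimpleGraph V} {P : Set V} (hne : P.Nonempty)
    (h : ∀ u ∈ P, ∀ v ∈ P, (Rg W P).Reachable u v) : (W.induce P).Connected := by
  rw [SimpleGraph.connected_iff]
  refine ⟨?_, ⟨⟨hne.choose, hne.choose_spec⟩⟩⟩
  rintro ⟨u, hu⟩ ⟨v, hv⟩
  exact (h u hu v hv).elim fun p => rg_reach_induce p hu hv

private lemma cliqueKey {G W : SimpleGraph V} (hle : G ≤ W) {S : Set V} {t : V → Finset V}
    (hCE : CliqueExpansion W S t) {Z : Set V} :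
    ∀ {x y : ↥Z}, (G.induce Z).Walk x y → (y : V) ∈ S →
      (((x : V) ∈ S → (Rg W (S ∩ Z)).Reachable x y) ∧
       ((x : V) ∉ S → ∃ u ∈ t (x : V), u ∈ Z ∧ (Rg W (S ∩ Z)).Reachable u y)) := by
  intro x y p
  induction p with
  | nil =>
    intro hyS
    exact ⟨fun _ => Reachable.refl _, fun hxS => absurd hyS hxS⟩
  | @cons x x' y h q ih =>
    intro hyS
    have hG' : G.Adj ↑x ↑x' := h
    have hW : W.Adj ↑x ↑x' := hle hG'
    constructor
    · intro hxS
      by_cases hx'S : (x' : V) ∈ S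
      · have hadj : (Rg W (S ∩ Z)).Adj ↑x ↑x' := ⟨⟨hxS, x.2⟩, ⟨hx'S, x'.2⟩, hW⟩
        exact hadj.reachable.trans ((ih hyS).1 hx'S)
      · obtain ⟨u, hut, huZ, hur⟩ := (ih hyS).2 hx'S
        have hCE' := hCE ↑x' hx'S
        have hxt : (x : V) ∈ t ↑x' := by
          rcases (hCE'.2.2.2 ↑x).1 hW.symm with h1 | h1
          · exact h1
          · exact absurd hxS h1.1
        have huS : u ∈ S := hCE'.1 hut
        by_cases hux : (x : V) = u
        · rw [hux]; exact hur
        · have hadj : (Rg W (S ∩ Z)).Adj ↑x u :=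
            ⟨⟨hxS, x.2⟩, ⟨huS, huZ⟩, hCE'.2.2.1 ↑x hxt u hut hux⟩
          exact hadj.reachable.trans hur
    · intro hxS
      have hCE' := hCE ↑x hxS
      rcases (hCE'.2.2.2 ↑x').1 hW with h1 | h1
      · have hx'S : (x' : V) ∈ S := hCE'.1 h1
        exact ⟨↑x', h1, x'.2, (ih hyS).1 hx'S⟩
      · obtain ⟨u, hut, huZ, hur⟩ := (ih hyS).2 h1.1
        rw [h1.2.2] at hut
        exact ⟨u, hut, huZ, hur⟩

private lemma induce_conn_map {V1 V2 : Type*} {G1 : SimpleGraph V1} {G2 : SimpleGraph V2}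
    (f : V1 → V2) {s : Set V1}
    (hadj : ∀ u ∈ s, ∀ v ∈ s, G1.Adj u v → G2.Adj (f u) (f v))
    (h : (G1.induce s).Connected) : (G2.induce (f '' s)).Connected := by
  rw [SimpleGraph.connected_iff]
  obtain ⟨⟨u0, hu0⟩⟩ := h.nonempty
  refine ⟨?_, ⟨⟨f u0, ⟨u0, hu0, rfl⟩⟩⟩⟩
  have main : ∀ {p q : ↥s}, (G1.induce s).Walk p q →
      (G2.induce (f '' s)).Reachable ⟨f ↑p, ⟨↑p, p.2, rfl⟩⟩ ⟨f ↑q, ⟨↑q, q.2, rfl⟩⟩ := by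
    intro p q w
    induction w with
    | nil => exact Reachable.refl _
    | @cons p r q h w ih =>
      have hadj' : (G2.induce (f '' s)).Adj ⟨f ↑p, ⟨↑p, p.2, rfl⟩⟩ ⟨f ↑r, ⟨↑r, r.2, rfl⟩⟩ :=
        hadj ↑p p.2 ↑r r.2 h
      exact hadj'.reachable.trans ih
  rintro ⟨x, u, hu, rfl⟩ ⟨y, v, hv, rfl⟩
  exact (h.preconnected ⟨u, hu⟩ ⟨v, hv⟩).elim fun w => main w

private lemma induce_singleton_connected {V2 : Type*} (G2 : SimpleGraph V2) (x : V2) :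
    (G2.induce {x}).Connected := by
  rw [SimpleGraph.connected_iff]
  refine ⟨fun u v => ?_, ⟨⟨x, rfl⟩⟩⟩
  have huv : u = v := Subtype.ext (u.2.trans v.2.symm)
  exact huv ▸ Reachable.refl _

private lemma edge_transfer {G W : SimpleGraph V} (hle : G ≤ W) {S : Set V} {t : V → Finset V}
    (hCE : CliqueExpansion W S t) {Z Z' : Set V} (hd : Disjoint Z Z')
    (hZ : ∀ x ∈ Z, x ∉ S → ∃ u ∈ t x, u ∈ Z) (hZ' : ∀ x ∈ Z', x ∉ S → ∃ u ∈ t x, u ∈ Z')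
    (he : ∃ x ∈ Z, ∃ y ∈ Z', G.Adj x y) :
    ∃ u ∈ S ∩ Z, ∃ v ∈ S ∩ Z', W.Adj u v := by
  obtain ⟨x, hx, y, hy, hxy⟩ := he
  have hW := hle hxy
  by_cases hxS : x ∈ S <;> by_cases hyS : y ∈ S
  · exact ⟨x, ⟨hxS, hx⟩, y, ⟨hyS, hy⟩, hW⟩
  · obtain ⟨v, hvt, hvZ'⟩ := hZ' y hy hyS
    have hCEy := hCE y hyS
    have hxt : x ∈ t y := by
      rcases (hCEy.2.2.2 x).1 hW.symm with h1 | h1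
      · exact h1
      · exact absurd hxS h1.1
    have hne : x ≠ v := fun h => Set.disjoint_left.mp hd hx (h ▸ hvZ')
    exact ⟨x, ⟨hxS, hx⟩, v, ⟨hCEy.1 hvt, hvZ'⟩, hCEy.2.2.1 x hxt v hvt hne⟩
  · obtain ⟨u, hut, huZ⟩ := hZ x hx hxS
    have hCEx := hCE x hxS
    have hyt : y ∈ t x := by
      rcases (hCEx.2.2.2 y).1 hW with h1 | h1
      · exact h1
      · exact absurd hyS h1.1
    have hne : u ≠ y := fun h => Set.disjoint_left.mp hd huZ (h ▸ hy)
    exact ⟨u, ⟨hCEx.1 hut, huZ⟩, y, ⟨hyS, hy⟩, hCEx.2.2.1 u hut y hyt hne⟩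
  · obtain ⟨u, hut, huZ⟩ := hZ x hx hxS
    obtain ⟨v, hvt, hvZ'⟩ := hZ' y hy hyS
    have hCEx := hCE x hxS
    have hty : t y = t x := by
      rcases (hCEx.2.2.2 y).1 hW with h1 | h1
      · exact absurd (hCEx.1 h1) hyS
      · exact h1.2.2
    rw [hty] at hvt
    have hne : u ≠ v := fun h => Set.disjoint_left.mp hd huZ (h ▸ hvZ')
    exact ⟨u, ⟨hCEx.1 hut, huZ⟩, v, ⟨hCEx.1 hvt, hvZ'⟩, hCEx.2.2.1 u hut v hvt hne⟩

/-- a connected spanning subgraph of an `(a,b,c,d)`-web has no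
`K₄`-minor rooted at `a,b,c,d` in which every vertex lies in some branch set. -/
theorem web_no_spanning_rooted_K4_minor (G W : SimpleGraph V) (a b c d : V)
    (hG : G.Connected) (hle : G ≤ W) (hW : IsWeb W a b c d) :
    ¬ ∃ A B C D : Set V,
        RootedK4MinorOn G a b c d A B C D ∧ A ∪ B ∪ C ∪ D = Set.univ := by
  classical
  rintro ⟨A, B, C, D, ⟨haA, hbB, hcC, hdD, hAc, hBc, hCc, hDc, hAB, hAC, hAD, hBC, hBD, hCD,
    eAB, eAC, eAD, eBC, eBD, eCD⟩, -⟩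
  obtain ⟨S, ha, hb, hc, hd, hQT, t, hCE⟩ := hW
  have hAP : IsPlanar (Apex (W.induce S)
      ({⟨a, ha⟩, ⟨b, hb⟩, ⟨c, hc⟩, ⟨d, hd⟩} : Set ↥S)) :=
    hQT.2.2.2.2.2.2.2.2.2.2.2.1
  set H := W.induce S with hH
  set Q : Set ↥S := {⟨a, ha⟩, ⟨b, hb⟩, ⟨c, hc⟩, ⟨d, hd⟩} with hQ
  -- per-branch-set facts
  have main : ∀ (Z : Set V) (z : V), z ∈ Z → z ∈ S → (G.induce Z).Connected →
      ((W.induce (S ∩ Z)).Connected ∧ ∀ x ∈ Z, x ∉ S → ∃ u ∈ t x, u ∈ Z) := by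
    intro Z z hz hzS hconn
    constructor
    · refine rg_connected ⟨z, hzS, hz⟩ fun u hu v hv => ?_
      exact (hconn.preconnected ⟨u, hu.2⟩ ⟨v, hv.2⟩).elim fun p =>
        (cliqueKey hle hCE p hv.1).1 hu.1
    · intro x hxZ hxS
      obtain ⟨u, hut, huZ, -⟩ := (hconn.preconnected ⟨x, hxZ⟩ ⟨z, hz⟩).elim
        (fun p => (cliqueKey hle hCE p hzS).2 hxS)
      exact ⟨u, hut, huZ⟩
  obtain ⟨cA, tA⟩ := main A a haA ha hAc
  obtain ⟨cB, tB⟩ := main B b hbB hb hBc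
  obtain ⟨cC, tC⟩ := main C c hcC hc hCc
  obtain ⟨cD, tD⟩ := main D d hdD hd hDc
  -- the embedding of S into Option ↥S
  set f : V → Option ↥S := fun v => if h : v ∈ S then some ⟨v, h⟩ else none with hfdef
  have hfs : ∀ (v : V) (hv : v ∈ S), f v = some ⟨v, hv⟩ := fun v hv => dif_pos hv
  -- connectivity of images
  have hconnimg : ∀ Z : Set V, (W.induce (S ∩ Z)).Connected →
      ((Apex H Q).induce (f '' (S ∩ Z))).Connected := by
    intro Z h
    refine induce_conn_map f (fun u hu v hv hadj => ?_) h
    exact Or.inl ⟨⟨u, hu.1⟩, ⟨v, hv.1⟩, hfs u hu.1, hfs v hv.1, hadj⟩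
  -- disjointness of images
  have hdisj : ∀ {Z Z' : Set V}, Disjoint Z Z' →
      Disjoint (f '' (S ∩ Z)) (f '' (S ∩ Z')) := by
    intro Z Z' h
    rw [Set.disjoint_left]
    rintro o ⟨u, hu, rfl⟩ ⟨v, hv, hvo⟩
    rw [hfs u hu.1, hfs v hv.1, Option.some_inj, Subtype.mk_eq_mk] at hvo
    exact absurd (hvo ▸ hv.2) (Set.disjoint_left.mp h hu.2)
  have hdnone : ∀ Z : Set V, Disjoint (f '' (S ∩ Z)) {(none : Option ↥S)} := by
    intro Z
    rw [Set.disjoint_right]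
    rintro o rfl ⟨u, hu, hcon⟩
    rw [hfs u hu.1] at hcon
    exact Option.some_ne_none _ hcon
  -- edges between images
  have hedge : ∀ {Z Z' : Set V}, (∃ u ∈ S ∩ Z, ∃ v ∈ S ∩ Z', W.Adj u v) →
      ∃ x ∈ f '' (S ∩ Z), ∃ y ∈ f '' (S ∩ Z'), (Apex H Q).Adj x y := by
    rintro Z Z' ⟨u, hu, v, hv, huv⟩
    exact ⟨f u, ⟨u, hu, rfl⟩, f v, ⟨v, hv, rfl⟩,
      Or.inl ⟨⟨u, hu.1⟩, ⟨v, hv.1⟩, hfs u hu.1, hfs v hv.1, huv⟩⟩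
  have hswap : ∀ {s s' : Set (Option ↥S)}, (∃ x ∈ s, ∃ y ∈ s', (Apex H Q).Adj x y) →
      ∃ x ∈ s', ∃ y ∈ s, (Apex H Q).Adj x y := by
    rintro s s' ⟨x, hx, y, hy, h⟩; exact ⟨y, hy, x, hx, h.symm⟩
  have hroot : ∀ {Z : Set V} (r : V) (hrS : r ∈ S), r ∈ Z → (⟨r, hrS⟩ : ↥S) ∈ Q →
      ∃ x ∈ f '' (S ∩ Z), ∃ y ∈ ({none} : Set (Option ↥S)), (Apex H Q).Adj x y :=
    fun r hrS hrZ hrQ => ⟨f r, ⟨r, ⟨hrS, hrZ⟩, rfl⟩, none, rfl,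
      Or.inr (Or.inl ⟨⟨r, hrS⟩, hfs r hrS, rfl, hrQ⟩)⟩
  have EAB := hedge (edge_transfer hle hCE hAB tA tB eAB)
  have EAC := hedge (edge_transfer hle hCE hAC tA tC eAC)
  have EAD := hedge (edge_transfer hle hCE hAD tA tD eAD)
  have EBC := hedge (edge_transfer hle hCE hBC tB tC eBC)
  have EBD := hedge (edge_transfer hle hCE hBD tB tD eBD)
  have ECD := hedge (edge_transfer hle hCE hCD tC tD eCD)
  have EA4 := hroot a ha haA (by simp [hQ])
  have EB4 := hroot b hb hbB (by simp [hQ])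
  have EC4 := hroot c hc hcC (by simp [hQ])
  have ED4 := hroot d hd hdD (by simp [hQ])
  refine hAP.1 ⟨![f '' (S ∩ A), f '' (S ∩ B), f '' (S ∩ C), f '' (S ∩ D), {none}],
    ?_, ?_, ?_, ?_⟩
  · intro w
    fin_cases w
    · exact ⟨f a, a, ⟨ha, haA⟩, rfl⟩
    · exact ⟨f b, b, ⟨hb, hbB⟩, rfl⟩
    · exact ⟨f c, c, ⟨hc, hcC⟩, rfl⟩
    · exact ⟨f d, d, ⟨hd, hdD⟩, rfl⟩
    · exact ⟨none, rfl⟩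
  · intro w
    fin_cases w
    · exact hconnimg A cA
    · exact hconnimg B cB
    · exact hconnimg C cC
    · exact hconnimg D cD
    · exact induce_singleton_connected _ none
  · intro i j hij
    fin_cases i <;> fin_cases j <;>
      first
        | exact absurd rfl hij
        | exact hdisj hAB | exact (hdisj hAB).symm
        | exact hdisj hAC | exact (hdisj hAC).symm
        | exact hdisj hAD | exact (hdisj hAD).symm
        | exact hdisj hBC | exact (hdisj hBC).symm
        | exact hdisj hBD | exact (hdisj hBD).symm
        | exact hdisj hCD | exact (hdisj hCD).symm
        | exact hdnone A | exact (hdnone A).symm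
        | exact hdnone B | exact (hdnone B).symm
        | exact hdnone C | exact (hdnone C).symm
        | exact hdnone D | exact (hdnone D).symm
  · intro w w' hww
    fin_cases w <;> fin_cases w' <;>
      first
        | exact absurd rfl hww
        | exact EAB | exact hswap EAB
        | exact EAC | exact hswap EAC
        | exact EAD | exact hswap EAD
        | exact EBC | exact hswap EBC
        | exact EBD | exact hswap EBD
        | exact ECD | exact hswap ECD
        | exact EA4 | exact hswap EA4
        | exact EB4 | exact hswap EB4
        | exact EC4 | exact hswap EC4
        | exact ED4 | exact hswap ED4
end

section
/- Every planar triangulation G contains a K_4-minor rooted at a, b, c, d for every choice of four distinct vertices a, b, c, d of G. -/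
open SimpleGraph

variable {V : Type*}

set_option linter.unusedSectionVars false
set_option linter.unusedVariables false

namespace K4Aux
variable {α β : Type*}

lemma induce_adj' {G : SimpleGraph α} {s : Set α} {a b : s} :
    (G.induce s).Adj a b ↔ G.Adj ↑a ↑b := Iff.rfl

lemma induce_connected_transfer {G : SimpleGraph α} {H : SimpleGraph β}
    {S : Set α} {T : Set β} {f : α → β} (hf : ∀ x : S, f ↑x ∈ T)
    (hS : (G.induce S).Connected)
    (hadj : ∀ x y : S, G.Adj ↑x ↑y → (H.induce T).Reachable ⟨f ↑x, hf x⟩ ⟨f ↑y, hf y⟩)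
    (hcov : ∀ t : T, ∃ x : S, (H.induce T).Reachable t ⟨f ↑x, hf x⟩) :
    (H.induce T).Connected := by
  have key : ∀ x y : S, (H.induce T).Reachable ⟨f ↑x, hf x⟩ ⟨f ↑y, hf y⟩ := by
    intro x y
    obtain ⟨w⟩ := hS.preconnected x y
    induction w with
    | nil => exact Reachable.refl _
    | @cons x z y h p ih => exact (hadj x z (induce_adj'.mp h)).trans ih
  rw [connected_iff]
  obtain ⟨x⟩ := hS.nonempty
  refine ⟨?_, ⟨⟨f ↑x, hf x⟩⟩⟩
  intro t t'
  obtain ⟨p, hp⟩ := hcov t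
  obtain ⟨q, hq⟩ := hcov t'
  exact hp.trans ((key p q).trans hq.symm)

lemma induce_connected_singleton (G : SimpleGraph α) (x : α) :
    (G.induce {x}).Connected := by
  rw [connected_iff]
  refine ⟨?_, ⟨⟨x, rfl⟩⟩⟩
  rintro ⟨a, ha⟩ ⟨b, hb⟩
  cases ha; cases hb; exact Reachable.refl _

lemma induce_connected_pair {G : SimpleGraph α} {x y : α} (h : G.Adj x y) :
    (G.induce {x, y}).Connected := by
  rw [connected_iff]
  refine ⟨?_, ⟨⟨x, Or.inl rfl⟩⟩⟩
  have hadj : (G.induce {x, y}).Adj ⟨x, Or.inl rfl⟩ ⟨y, Or.inr rfl⟩ := induce_adj'.mpr h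
  rintro ⟨a, (rfl | rfl)⟩ ⟨b, (rfl | rfl)⟩
  · exact Reachable.refl _
  · exact hadj.reachable
  · exact hadj.symm.reachable
  · exact Reachable.refl _

end K4Aux

namespace K4Aux
variable {α β : Type*}

def contract (G : SimpleGraph α) (u v : α) : SimpleGraph {x : α // x ≠ v} where
  Adj x y := x ≠ y ∧ (G.Adj ↑x ↑y ∨ (↑x = u ∧ G.Adj v ↑y) ∨ (↑y = u ∧ G.Adj ↑x v))
  symm := by
    constructor
    rintro x y ⟨hne, (h | ⟨h1, h2⟩ | ⟨h1, h2⟩)⟩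
    · exact ⟨hne.symm, Or.inl h.symm⟩
    · exact ⟨hne.symm, Or.inr (Or.inr ⟨h1, h2.symm⟩)⟩
    · exact ⟨hne.symm, Or.inr (Or.inl ⟨h1, h2.symm⟩)⟩
  loopless := ⟨fun x => by rintro ⟨hne, -⟩; exact hne rfl⟩

variable {G : SimpleGraph α} {u v : α}

lemma contract_adj {x y : {x : α // x ≠ v}} :
    (contract G u v).Adj x y ↔
      x ≠ y ∧ (G.Adj ↑x ↑y ∨ (↑x = u ∧ G.Adj v ↑y) ∨ (↑y = u ∧ G.Adj ↑x v)) := Iff.rfl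

def liftSet (hu : u ≠ v) (B : Set {x : α // x ≠ v}) : Set α :=
  Subtype.val '' B ∪ {z | z = v ∧ ⟨u, hu⟩ ∈ B}

lemma mem_liftSet_val {hu : u ≠ v} {B : Set {x : α // x ≠ v}} {x : {x : α // x ≠ v}}
    (hx : x ∈ B) : (↑x : α) ∈ liftSet hu B := Or.inl ⟨x, hx, rfl⟩

lemma v_mem_liftSet {hu : u ≠ v} {B : Set {x : α // x ≠ v}}
    (h : ⟨u, hu⟩ ∈ B) : v ∈ liftSet hu B := Or.inr ⟨rfl, h⟩

lemma liftSet_disjoint {hu : u ≠ v} {B C : Set {x : α // x ≠ v}} (h : Disjoint B C) :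
    Disjoint (liftSet hu B) (liftSet hu C) := by
  rw [Set.disjoint_left]
  rintro a (⟨x, hx, rfl⟩ | ⟨rfl, hub⟩) hc
  · rcases hc with ⟨y, hy, hxy⟩ | ⟨h1, -⟩
    · obtain rfl : y = x := Subtype.val_injective hxy
      exact Set.disjoint_left.mp h hx hy
    · exact x.2 h1
  · rcases hc with ⟨y, hy, hxy⟩ | ⟨-, huc⟩
    · exact y.2 hxy
    · exact (Set.disjoint_left.mp h hub) huc

lemma liftSet_connected (huv : G.Adj u v) {B : Set {x : α // x ≠ v}}
    (hB : ((contract G u v).induce B).Connected) :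
    (G.induce (liftSet huv.ne B)).Connected := by
  set T := liftSet huv.ne B with hT
  have hf : ∀ x : B, (↑↑x : α) ∈ T := fun x => mem_liftSet_val x.2
  refine induce_connected_transfer (G := contract G u v) (f := Subtype.val) hf hB ?_ ?_
  · rintro x y ⟨hne, (h | ⟨hxu, hvy⟩ | ⟨hyu, hxv⟩)⟩
    · have e : (G.induce T).Adj ⟨↑↑x, hf x⟩ ⟨↑↑y, hf y⟩ := induce_adj'.mpr h
      exact e.reachable
    · have hxB : (⟨u, huv.ne⟩ : {x : α // x ≠ v}) ∈ B := by
        have : (⟨u, huv.ne⟩ : {x : α // x ≠ v}) = ↑x := Subtype.ext hxu.symm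
        rw [this]; exact x.2
      have hvT : v ∈ T := v_mem_liftSet hxB
      have e1 : (G.induce T).Adj ⟨↑↑x, hf x⟩ ⟨v, hvT⟩ := induce_adj'.mpr (by rw [hxu]; exact huv)
      have e2 : (G.induce T).Adj ⟨v, hvT⟩ ⟨↑↑y, hf y⟩ := induce_adj'.mpr hvy
      exact e1.reachable.trans e2.reachable
    · have hyB : (⟨u, huv.ne⟩ : {x : α // x ≠ v}) ∈ B := by
        have : (⟨u, huv.ne⟩ : {x : α // x ≠ v}) = ↑y := Subtype.ext hyu.symm
        rw [this]; exact y.2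
      have hvT : v ∈ T := v_mem_liftSet hyB
      have e1 : (G.induce T).Adj ⟨↑↑x, hf x⟩ ⟨v, hvT⟩ := induce_adj'.mpr hxv
      have e2 : (G.induce T).Adj ⟨v, hvT⟩ ⟨↑↑y, hf y⟩ := induce_adj'.mpr (by rw [hyu]; exact huv.symm)
      exact e1.reachable.trans e2.reachable
  · rintro ⟨t, (⟨x, hx, rfl⟩ | ⟨heq, hub⟩)⟩
    · exact ⟨⟨x, hx⟩, Reachable.refl _⟩
    · subst heq
      refine ⟨⟨⟨u, huv.ne⟩, hub⟩, ?_⟩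
      have huT : u ∈ T := mem_liftSet_val hub
      have htT : t ∈ T := v_mem_liftSet hub
      have e : (G.induce T).Adj ⟨t, htT⟩ ⟨u, huT⟩ := induce_adj'.mpr huv.symm
      exact e.reachable

lemma liftSet_cross (huv : G.Adj u v) {B C : Set {x : α // x ≠ v}} {x y : {x : α // x ≠ v}}
    (hx : x ∈ B) (hy : y ∈ C) (h : (contract G u v).Adj x y) :
    ∃ p ∈ liftSet huv.ne B, ∃ q ∈ liftSet huv.ne C, G.Adj p q := by
  obtain ⟨hne, (h | ⟨hxu, hvy⟩ | ⟨hyu, hxv⟩)⟩ := h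
  · exact ⟨↑x, mem_liftSet_val hx, ↑y, mem_liftSet_val hy, h⟩
  · have hxB : (⟨u, huv.ne⟩ : {x : α // x ≠ v}) ∈ B := by
      have : (⟨u, huv.ne⟩ : {x : α // x ≠ v}) = x := Subtype.ext hxu.symm
      rw [this]; exact hx
    exact ⟨v, v_mem_liftSet hxB, ↑y, mem_liftSet_val hy, hvy⟩
  · have hyC : (⟨u, huv.ne⟩ : {x : α // x ≠ v}) ∈ C := by
      have : (⟨u, huv.ne⟩ : {x : α // x ≠ v}) = y := Subtype.ext hyu.symm
      rw [this]; exact hy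
    exact ⟨↑x, mem_liftSet_val hx, v, v_mem_liftSet hyC, hxv⟩

lemma liftSet_nonempty {hu : u ≠ v} {B : Set {x : α // x ≠ v}} (h : B.Nonempty) :
    (liftSet hu B).Nonempty := by
  obtain ⟨x, hx⟩ := h; exact ⟨↑x, mem_liftSet_val hx⟩

lemma minor_of_contract (huv : G.Adj u v) {W : Type*} {H : SimpleGraph W}
    (h : HasGraphMinor (contract G u v) H) : HasGraphMinor G H := by
  obtain ⟨B, hne, hconn, hdisj, hadj⟩ := h
  refine ⟨fun w => liftSet huv.ne (B w), fun w => liftSet_nonempty (hne w),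
    fun w => liftSet_connected huv (hconn w), fun w w' hww => liftSet_disjoint (hdisj hww), ?_⟩
  intro w w' hww
  obtain ⟨x, hx, y, hy, hxy⟩ := hadj hww
  exact liftSet_cross huv hx hy hxy

lemma rootedK4_of_contract (huv : G.Adj u v) {a b c d : α}
    (ha : a ≠ v) (hb : b ≠ v) (hc : c ≠ v) (hd : d ≠ v)
    (h : RootedK4Minor (contract G u v) ⟨a, ha⟩ ⟨b, hb⟩ ⟨c, hc⟩ ⟨d, hd⟩) :
    RootedK4Minor G a b c d := by
  obtain ⟨A, B, C, D, hA, hB, hC, hD, cA, cB, cC, cD, dAB, dAC, dAD, dBC, dBD, dCD,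
    eAB, eAC, eAD, eBC, eBD, eCD⟩ := h
  refine ⟨liftSet huv.ne A, liftSet huv.ne B, liftSet huv.ne C, liftSet huv.ne D,
    mem_liftSet_val hA, mem_liftSet_val hB, mem_liftSet_val hC, mem_liftSet_val hD,
    liftSet_connected huv cA, liftSet_connected huv cB,
    liftSet_connected huv cC, liftSet_connected huv cD,
    liftSet_disjoint dAB, liftSet_disjoint dAC, liftSet_disjoint dAD,
    liftSet_disjoint dBC, liftSet_disjoint dBD, liftSet_disjoint dCD,
    ?_, ?_, ?_, ?_, ?_, ?_⟩
  · obtain ⟨x, hx, y, hy, hxy⟩ := eAB; exact liftSet_cross huv hx hy hxy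
  · obtain ⟨x, hx, y, hy, hxy⟩ := eAC; exact liftSet_cross huv hx hy hxy
  · obtain ⟨x, hx, y, hy, hxy⟩ := eAD; exact liftSet_cross huv hx hy hxy
  · obtain ⟨x, hx, y, hy, hxy⟩ := eBC; exact liftSet_cross huv hx hy hxy
  · obtain ⟨x, hx, y, hy, hxy⟩ := eBD; exact liftSet_cross huv hx hy hxy
  · obtain ⟨x, hx, y, hy, hxy⟩ := eCD; exact liftSet_cross huv hx hy hxy

lemma minor_mono {G₁ G₂ : SimpleGraph α} (h : G₁ ≤ G₂) {W : Type*} {H : SimpleGraph W}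
    (hm : HasGraphMinor G₁ H) : HasGraphMinor G₂ H := by
  obtain ⟨B, hne, hconn, hdisj, hadj⟩ := hm
  refine ⟨B, hne, fun w => (hconn w).mono ?_, hdisj, ?_⟩
  · intro x y hxy; exact h hxy
  · intro w w' hww
    obtain ⟨x, hx, y, hy, hxy⟩ := hadj hww
    exact ⟨x, hx, y, hy, h hxy⟩

lemma minor_of_induce {S : Set α} {W : Type*} {H : SimpleGraph W}
    (h : HasGraphMinor (G.induce S) H) : HasGraphMinor G H := by
  obtain ⟨B, hne, hconn, hdisj, hadj⟩ := h
  refine ⟨fun w => Subtype.val '' B w, fun w => (hne w).image _,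
    fun w => ?_, fun w w' hww => ?_, ?_⟩
  · refine induce_connected_transfer (G := G.induce S) (f := Subtype.val)
      (fun x => ⟨↑x, x.2, rfl⟩) (hconn w) ?_ ?_
    · intro x y hxy
      have e : (G.induce (Subtype.val '' B w)).Adj ⟨↑↑x, ⟨↑x, x.2, rfl⟩⟩ ⟨↑↑y, ⟨↑y, y.2, rfl⟩⟩ :=
        induce_adj'.mpr (induce_adj'.mp hxy)
      exact e.reachable
    · rintro ⟨t, ⟨x, hx, rfl⟩⟩; exact ⟨⟨x, hx⟩, Reachable.refl _⟩
  · exact (Set.disjoint_image_iff Subtype.val_injective).mpr (hdisj hww)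
  · intro w w' hww
    obtain ⟨x, hx, y, hy, hxy⟩ := hadj hww
    exact ⟨↑x, ⟨x, hx, rfl⟩, ↑y, ⟨y, hy, rfl⟩, hxy⟩

end K4Aux

namespace K4Aux
section Counting
variable {α : Type*} [Fintype α] [DecidableEq α] {G : SimpleGraph α} {u v : α}

lemma ncard_edgeSet_eq (G : SimpleGraph α) [Fintype ↑G.edgeSet] :
    G.edgeSet.ncard = G.edgeFinset.card := by
  rw [← coe_edgeFinset]; exact Set.ncard_coe_finset _

instance contract_decRel [DecidableRel G.Adj] : DecidableRel (contract G u v).Adj := fun x y =>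
  decidable_of_iff' _ contract_adj

instance induce_decRel [DecidableRel G.Adj] {S : Set α} [DecidablePred (· ∈ S)] :
    DecidableRel (G.induce S).Adj := fun x y =>
  inferInstanceAs (Decidable (G.Adj x y))

lemma card_compl_vertex (v : α) : Fintype.card {x : α // x ≠ v} + 1 = Fintype.card α := by
  have h1 : Fintype.card {x : α // x = v} = 1 := Fintype.card_subtype_eq v
  have h2 : Fintype.card {x : α // ¬ x = v} = Fintype.card α - Fintype.card {x : α // x = v} :=
    Fintype.card_subtype_compl _
  have h3 : 1 ≤ Fintype.card α := Fintype.card_pos_iff.mpr ⟨v⟩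
  have : Fintype.card {x : α // x ≠ v} = Fintype.card {x : α // ¬ x = v} := rfl
  omega

lemma ncard_deleteEdges {ε : Sym2 α} (hε : ε ∈ G.edgeSet) :
    (G.deleteEdges {ε}).edgeSet.ncard + 1 = G.edgeSet.ncard := by
  rw [edgeSet_deleteEdges]
  exact Set.ncard_diff_singleton_add_one hε (Set.toFinite _)

variable [DecidableRel G.Adj]

lemma card_edgeFinset_delete_vertex (v : α) :
    G.edgeFinset.card ≤ (G.induce {x : α | x ≠ v}).edgeFinset.card + G.degree v := by
  classical
  have hsub : G.edgeFinset ⊆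
      ((G.induce {x : α | x ≠ v}).edgeFinset.image (Sym2.map Subtype.val)) ∪
        G.incidenceFinset v := by
    intro e he
    induction e using Sym2.ind with
    | _ x y =>
      rw [mem_edgeFinset, mem_edgeSet] at he
      by_cases hx : x = v
      · subst hx
        refine Finset.mem_union_right _ ?_
        rw [mem_incidenceFinset]
        exact (G.mem_incidenceSet _ _).mpr he
      · by_cases hy : y = v
        · subst hy
          refine Finset.mem_union_right _ ?_
          rw [mem_incidenceFinset, Sym2.eq_swap]
          exact (G.mem_incidenceSet _ _).mpr he.symm
        · refine Finset.mem_union_left _ ?_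
          refine Finset.mem_image.mpr ⟨s(⟨x, hx⟩, ⟨y, hy⟩), ?_, by rw [Sym2.map_pair_eq]⟩
          rw [mem_edgeFinset, mem_edgeSet]
          exact he
  calc G.edgeFinset.card ≤ _ := Finset.card_le_card hsub
    _ ≤ ((G.induce {x : α | x ≠ v}).edgeFinset.image (Sym2.map Subtype.val)).card
        + (G.incidenceFinset v).card := Finset.card_union_le _ _
    _ ≤ (G.induce {x : α | x ≠ v}).edgeFinset.card + G.degree v := by
        gcongr ?_ + ?_
        · exact Finset.card_image_le
        · rw [card_incidenceFinset_eq_degree]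

end Counting
end K4Aux

namespace K4Aux
section ContractCount
variable {α : Type*} [Fintype α] [DecidableEq α] {G : SimpleGraph α} [DecidableRel G.Adj] {u v : α}

/-- The vertex map collapsing `v` onto `u`. -/
private def phi (hu : u ≠ v) (x : α) : {x : α // x ≠ v} :=
  if h : x = v then ⟨u, hu⟩ else ⟨x, h⟩

lemma phi_of_ne {hu : u ≠ v} {x : α} (hx : x ≠ v) : phi hu x = ⟨x, hx⟩ := dif_neg hx

lemma phi_of_eq {hu : u ≠ v} : phi hu v = ⟨u, hu⟩ := dif_pos rfl

lemma phi_eq_cases {hu : u ≠ v} {a b : α} (h : phi hu a = phi hu b) :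
    a = b ∨ (a = v ∧ b = u) ∨ (a = u ∧ b = v) := by
  by_cases ha : a = v <;> by_cases hb : b = v
  · subst ha; subst hb; exact Or.inl rfl
  · subst ha
    rw [phi_of_eq, phi_of_ne hb] at h
    exact Or.inr (Or.inl ⟨rfl, (Subtype.ext_iff.mp h).symm⟩)
  · subst hb
    rw [phi_of_eq, phi_of_ne ha] at h
    exact Or.inr (Or.inr ⟨Subtype.ext_iff.mp h, rfl⟩)
  · rw [phi_of_ne ha, phi_of_ne hb] at h
    exact Or.inl (Subtype.ext_iff.mp h)

lemma card_edgeFinset_contract (huv : G.Adj u v) :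
    G.edgeFinset.card ≤ (contract G u v).edgeFinset.card + 1 +
      (G.neighborFinset u ∩ G.neighborFinset v).card := by
  classical
  set common : Finset α := G.neighborFinset u ∩ G.neighborFinset v with hcommon
  set bad : Finset (Sym2 α) := insert s(u, v) (common.image fun w => s(v, w)) with hbad
  set A : Finset (Sym2 α) := G.edgeFinset \ bad with hA
  have hmem_bad_pair : ∀ w : α, G.Adj u w → G.Adj v w → s(v, w) ∈ bad := by
    intro w h1 h2
    refine Finset.mem_insert_of_mem (Finset.mem_image.mpr ⟨w, ?_, rfl⟩)
    rw [hcommon, Finset.mem_inter, mem_neighborFinset, mem_neighborFinset]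
    exact ⟨h1, h2⟩
  have huv_bad : s(u, v) ∈ bad := Finset.mem_insert_self _ _
  -- extraction of membership facts
  have hmemA : ∀ x y : α, s(x, y) ∈ A → G.Adj x y ∧ s(x, y) ∉ bad := by
    intro x y h
    rw [hA, Finset.mem_sdiff, mem_edgeFinset, mem_edgeSet] at h
    exact h
  -- the image lands in the contracted graph
  have himg : A.image (Sym2.map (phi huv.ne)) ⊆ (contract G u v).edgeFinset := by
    intro e he
    obtain ⟨e', he', rfl⟩ := Finset.mem_image.mp he
    induction e' using Sym2.ind with
    | _ x y =>
      obtain ⟨hadj, hnb⟩ := hmemA x y he'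
      rw [Sym2.map_pair_eq, mem_edgeFinset, mem_edgeSet, contract_adj]
      by_cases hx : x = v
      · have hadj' : G.Adj v y := hx ▸ hadj
        have hy : y ≠ v := fun h => G.loopless.irrefl v (h ▸ hadj')
        have hyu : y ≠ u := by
          rintro rfl
          apply hnb
          rw [hx, Sym2.eq_swap]
          exact huv_bad
        rw [hx, phi_of_eq, phi_of_ne hy]
        refine ⟨?_, Or.inr (Or.inl ⟨rfl, hadj'⟩)⟩
        intro hc
        exact hyu (Subtype.ext_iff.mp hc).symm
      · by_cases hy : y = v
        · have hadj' : G.Adj x v := hy ▸ hadj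
          have hxu : x ≠ u := by
            rintro rfl
            apply hnb
            rw [hy]
            exact huv_bad
          rw [hy, phi_of_ne hx, phi_of_eq]
          refine ⟨?_, Or.inr (Or.inr ⟨rfl, hadj'⟩)⟩
          intro hc
          exact hxu (Subtype.ext_iff.mp hc)
        · rw [phi_of_ne hx, phi_of_ne hy]
          exact ⟨fun hc => hadj.ne (Subtype.ext_iff.mp hc), Or.inl hadj⟩
  -- injectivity on A
  have hhelper : ∀ x1 y1 x2 y2 : α, s(x1, y1) ∈ A → s(x2, y2) ∈ A →
      phi huv.ne x1 = phi huv.ne x2 → phi huv.ne y1 = phi huv.ne y2 →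
      s(x1, y1) = s(x2, y2) := by
    intro x1 y1 x2 y2 h1 h2 ex ey
    obtain ⟨adj1, nb1⟩ := hmemA _ _ h1
    obtain ⟨adj2, nb2⟩ := hmemA _ _ h2
    rcases phi_eq_cases ex with rfl | ⟨rfl, rfl⟩ | ⟨rfl, rfl⟩
    · rcases phi_eq_cases ey with rfl | ⟨rfl, rfl⟩ | ⟨rfl, rfl⟩
      · rfl
      · exact absurd (by rw [Sym2.eq_swap]; exact hmem_bad_pair x1 adj2.symm adj1.symm) nb1
      · exact absurd (by rw [Sym2.eq_swap]; exact hmem_bad_pair x1 adj1.symm adj2.symm) nb2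
    · rcases phi_eq_cases ey with rfl | ⟨rfl, rfl⟩ | ⟨rfl, rfl⟩
      · exact absurd (hmem_bad_pair y1 adj2 adj1) nb1
      · exact absurd adj1 (G.loopless.irrefl _)
      · exact absurd (by rw [Sym2.eq_swap]; exact huv_bad) nb1
    · rcases phi_eq_cases ey with rfl | ⟨rfl, rfl⟩ | ⟨rfl, rfl⟩
      · exact absurd (hmem_bad_pair y1 adj1 adj2) nb2
      · exact absurd huv_bad nb1
      · exact absurd adj2 (G.loopless.irrefl _)
  have hinj : Set.InjOn (Sym2.map (phi huv.ne)) ↑A := by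
    intro e1 he1 e2 he2 heq
    induction e1 using Sym2.ind with
    | _ x1 y1 =>
      induction e2 using Sym2.ind with
      | _ x2 y2 =>
        rw [Sym2.map_pair_eq, Sym2.map_pair_eq, Sym2.eq_iff] at heq
        rcases heq with ⟨hx, hy⟩ | ⟨hx, hy⟩
        · exact hhelper x1 y1 x2 y2 he1 he2 hx hy
        · rw [show s(x2, y2) = s(y2, x2) from Sym2.eq_swap]
          exact hhelper x1 y1 y2 x2 he1 (by rwa [Sym2.eq_swap]) hx hy
  have hbadcard : bad.card ≤ 1 + common.card := by
    calc bad.card ≤ (common.image fun w => s(v, w)).card + 1 := Finset.card_insert_le _ _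
      _ ≤ common.card + 1 := by gcongr ?_ + 1; exact Finset.card_image_le
      _ = 1 + common.card := by omega
  have h2 : A.card ≤ (contract G u v).edgeFinset.card := by
    rw [← Finset.card_image_of_injOn hinj]
    exact Finset.card_le_card himg
  have h1 : G.edgeFinset.card ≤ A.card + bad.card := Finset.card_le_card_sdiff_add_card
  omega

end ContractCount
end K4Aux

namespace K4Aux
section K5
variable {α : Type*} {G : SimpleGraph α}

lemma adj_exists_symm {A B : Set α} (h : ∃ x ∈ A, ∃ y ∈ B, G.Adj x y) :
    ∃ x ∈ B, ∃ y ∈ A, G.Adj x y := by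
  obtain ⟨x, hx, y, hy, hxy⟩ := h
  exact ⟨y, hy, x, hx, hxy.symm⟩

lemma hasK5_of (S : Fin 5 → Set α)
    (hne : ∀ i, (S i).Nonempty) (hconn : ∀ i, (G.induce (S i)).Connected)
    (hdisj : ∀ i j, i ≠ j → Disjoint (S i) (S j))
    (hadj : ∀ i j, i ≠ j → ∃ x ∈ S i, ∃ y ∈ S j, G.Adj x y) :
    HasGraphMinor G (⊤ : SimpleGraph (Fin 5)) :=
  ⟨S, hne, hconn, fun _ _ h => hdisj _ _ h, fun i j h => hadj i j (by simpa using h)⟩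

lemma hasK5_of_five (A B C D E : Set α)
    (hA : A.Nonempty) (hB : B.Nonempty) (hC : C.Nonempty) (hD : D.Nonempty) (hE : E.Nonempty)
    (cA : (G.induce A).Connected) (cB : (G.induce B).Connected) (cC : (G.induce C).Connected)
    (cD : (G.induce D).Connected) (cE : (G.induce E).Connected)
    (dAB : Disjoint A B) (dAC : Disjoint A C) (dAD : Disjoint A D) (dAE : Disjoint A E)
    (dBC : Disjoint B C) (dBD : Disjoint B D) (dBE : Disjoint B E)
    (dCD : Disjoint C D) (dCE : Disjoint C E) (dDE : Disjoint D E)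
    (eAB : ∃ x ∈ A, ∃ y ∈ B, G.Adj x y) (eAC : ∃ x ∈ A, ∃ y ∈ C, G.Adj x y)
    (eAD : ∃ x ∈ A, ∃ y ∈ D, G.Adj x y) (eAE : ∃ x ∈ A, ∃ y ∈ E, G.Adj x y)
    (eBC : ∃ x ∈ B, ∃ y ∈ C, G.Adj x y) (eBD : ∃ x ∈ B, ∃ y ∈ D, G.Adj x y)
    (eBE : ∃ x ∈ B, ∃ y ∈ E, G.Adj x y) (eCD : ∃ x ∈ C, ∃ y ∈ D, G.Adj x y)
    (eCE : ∃ x ∈ C, ∃ y ∈ E, G.Adj x y) (eDE : ∃ x ∈ D, ∃ y ∈ E, G.Adj x y) :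
    HasGraphMinor G (⊤ : SimpleGraph (Fin 5)) := by
  refine hasK5_of ![A, B, C, D, E] ?_ ?_ ?_ ?_
  · intro i; fin_cases i <;> assumption
  · intro i; fin_cases i <;> assumption
  · intro i j hij
    fin_cases i <;> fin_cases j <;>
      first
        | exact absurd rfl hij
        | assumption
        | (exact dAB.symm) | (exact dAC.symm) | (exact dAD.symm) | (exact dAE.symm)
        | (exact dBC.symm) | (exact dBD.symm) | (exact dBE.symm)
        | (exact dCD.symm) | (exact dCE.symm) | (exact dDE.symm)
  · intro i j hij
    fin_cases i <;> fin_cases j <;>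
      first
        | exact absurd rfl hij
        | assumption
        | (exact adj_exists_symm eAB) | (exact adj_exists_symm eAC)
        | (exact adj_exists_symm eAD) | (exact adj_exists_symm eAE)
        | (exact adj_exists_symm eBC) | (exact adj_exists_symm eBD)
        | (exact adj_exists_symm eBE) | (exact adj_exists_symm eCD)
        | (exact adj_exists_symm eCE) | (exact adj_exists_symm eDE)

lemma exists_of_card_eq_four {β : Type*} [DecidableEq β] {s : Finset β} (h : s.card = 4) :
    ∃ a b c d : β, a ≠ b ∧ a ≠ c ∧ a ≠ d ∧ b ≠ c ∧ b ≠ d ∧ c ≠ d ∧ s = {a, b, c, d} := by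
  obtain ⟨a, t, hat, rfl, ht⟩ := Finset.card_eq_succ.mp h
  obtain ⟨b, c, d, hbc, hbd, hcd, rfl⟩ := Finset.card_eq_three.mp ht
  simp only [Finset.mem_insert, Finset.mem_singleton, not_or] at hat
  exact ⟨a, b, c, d, hat.1, hat.2.1, hat.2.2, hbc, hbd, hcd, rfl⟩

lemma exists_of_card_eq_five {β : Type*} [DecidableEq β] {s : Finset β} (h : s.card = 5) :
    ∃ a b c d e : β, a ≠ b ∧ a ≠ c ∧ a ≠ d ∧ a ≠ e ∧ b ≠ c ∧ b ≠ d ∧ b ≠ e ∧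
      c ≠ d ∧ c ≠ e ∧ d ≠ e ∧ s = {a, b, c, d, e} := by
  obtain ⟨a, t, hat, rfl, ht⟩ := Finset.card_eq_succ.mp h
  obtain ⟨b, c, d, e, hbc, hbd, hbe, hcd, hce, hde, rfl⟩ := exists_of_card_eq_four ht
  simp only [Finset.mem_insert, Finset.mem_singleton, not_or] at hat
  exact ⟨a, b, c, d, e, hat.1, hat.2.1, hat.2.2.1, hat.2.2.2, hbc, hbd, hbe, hcd, hce, hde, rfl⟩

end K5
end K4Aux

namespace K4Aux
section Nbhd
variable {α : Type*} [Fintype α] [DecidableEq α] {G : SimpleGraph α} [DecidableRel G.Adj]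

lemma disj_single_single {x y : α} (h : x ≠ y) : Disjoint ({x} : Set α) {y} := by
  rw [Set.disjoint_left]; rintro a rfl rfl; exact h rfl

lemma disj_pair_single {x q y : α} (h1 : x ≠ y) (h2 : q ≠ y) :
    Disjoint ({x, q} : Set α) {y} := by
  rw [Set.disjoint_left]; rintro a (rfl | rfl) rfl
  · exact h1 rfl
  · exact h2 rfl

lemma disj_single_pair {y x q : α} (h1 : y ≠ x) (h2 : y ≠ q) :
    Disjoint ({y} : Set α) {x, q} := (disj_pair_single h1.symm h2.symm).symm

lemma single_mem {x : α} : x ∈ ({x} : Set α) := rfl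

lemma k5_of_dense_nbhd (v : α) (h4 : 4 ≤ G.degree v) (h5 : G.degree v ≤ 5)
    (hc : ∀ u, G.Adj v u → 3 ≤ (G.neighborFinset v ∩ G.neighborFinset u).card) :
    HasGraphMinor G (⊤ : SimpleGraph (Fin 5)) := by
  set s := G.neighborFinset v with hs
  have hvs : v ∉ s := by rw [hs, mem_neighborFinset]; exact G.loopless.irrefl v
  have hadj_of : ∀ u ∈ s, G.Adj v u := fun u hu => (mem_neighborFinset G v u).mp hu
  have hsub : ∀ u ∈ s, s ∩ G.neighborFinset u ⊆ s.erase u := by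
    intro u hu w hw
    rw [Finset.mem_inter] at hw
    rw [Finset.mem_erase]
    exact ⟨((mem_neighborFinset G u w).mp hw.2).ne', hw.1⟩
  have h4' : 4 ≤ s.card := h4
  have h5' : s.card ≤ 5 := h5
  have hvne : ∀ u ∈ s, v ≠ u := fun u hu h => hvs (h ▸ hu)
  -- two possible degrees
  have hcases : s.card = 4 ∨ s.card = 5 := by omega
  rcases hcases with hdeg | hdeg
  · -- degree 4 : the neighbourhood is a clique
    have all_adj : ∀ x ∈ s, ∀ y ∈ s, x ≠ y → G.Adj x y := by
      intro x hx y hy hxy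
      have hcard : (s.erase x).card = 3 := by rw [Finset.card_erase_of_mem hx, hdeg]
      have heq : s ∩ G.neighborFinset x = s.erase x :=
        Finset.eq_of_subset_of_card_le (hsub x hx)
          (by rw [hcard]; exact hc x (hadj_of x hx))
      have : y ∈ s ∩ G.neighborFinset x := by
        rw [heq, Finset.mem_erase]; exact ⟨hxy.symm, hy⟩
      exact (mem_neighborFinset G x y).mp (Finset.mem_inter.mp this).2
    obtain ⟨a, b, c, d, hab, hac, had, hbc, hbd, hcd, hseq⟩ := exists_of_card_eq_four hdeg
    have ha : a ∈ s := by rw [hseq]; simp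
    have hb : b ∈ s := by rw [hseq]; simp
    have hc' : c ∈ s := by rw [hseq]; simp
    have hd : d ∈ s := by rw [hseq]; simp
    refine hasK5_of_five {v} {a} {b} {c} {d}
      ⟨v, rfl⟩ ⟨a, rfl⟩ ⟨b, rfl⟩ ⟨c, rfl⟩ ⟨d, rfl⟩
      (induce_connected_singleton G v) (induce_connected_singleton G a)
      (induce_connected_singleton G b) (induce_connected_singleton G c)
      (induce_connected_singleton G d)
      (disj_single_single (hvne a ha)) (disj_single_single (hvne b hb))
      (disj_single_single (hvne c hc')) (disj_single_single (hvne d hd))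
      (disj_single_single hab) (disj_single_single hac) (disj_single_single had)
      (disj_single_single hbc) (disj_single_single hbd) (disj_single_single hcd)
      ⟨v, rfl, a, rfl, hadj_of a ha⟩ ⟨v, rfl, b, rfl, hadj_of b hb⟩
      ⟨v, rfl, c, rfl, hadj_of c hc'⟩ ⟨v, rfl, d, rfl, hadj_of d hd⟩
      ⟨a, rfl, b, rfl, all_adj a ha b hb hab⟩ ⟨a, rfl, c, rfl, all_adj a ha c hc' hac⟩
      ⟨a, rfl, d, rfl, all_adj a ha d hd had⟩ ⟨b, rfl, c, rfl, all_adj b hb c hc' hbc⟩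
      ⟨b, rfl, d, rfl, all_adj b hb d hd hbd⟩ ⟨c, rfl, d, rfl, all_adj c hc' d hd hcd⟩
  · -- degree 5
    have unique_nonnbr : ∀ x ∈ s, ∀ y ∈ s, ∀ z ∈ s, y ≠ x → z ≠ x →
        ¬G.Adj x y → ¬G.Adj x z → y = z := by
      intro x hx y hy z hz hyx hzx hxy hxz
      have hcard : (s.erase x).card = 4 := by rw [Finset.card_erase_of_mem hx, hdeg]
      have hsub2 : s ∩ G.neighborFinset x ⊆ s.erase x ∩ G.neighborFinset x := by
        intro w hw
        rw [Finset.mem_inter]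
        exact ⟨hsub x hx hw, (Finset.mem_inter.mp hw).2⟩
      have h3 : 3 ≤ (s.erase x ∩ G.neighborFinset x).card :=
        le_trans (hc x (hadj_of x hx)) (Finset.card_le_card hsub2)
      have hsd : (s.erase x \ G.neighborFinset x).card ≤ 1 := by
        have := Finset.card_sdiff_add_card_inter (s.erase x) (G.neighborFinset x)
        omega
      have hmy : y ∈ s.erase x \ G.neighborFinset x :=
        Finset.mem_sdiff.mpr ⟨Finset.mem_erase.mpr ⟨hyx, hy⟩,
          fun hmem => hxy ((mem_neighborFinset G x y).mp hmem)⟩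
      have hmz : z ∈ s.erase x \ G.neighborFinset x :=
        Finset.mem_sdiff.mpr ⟨Finset.mem_erase.mpr ⟨hzx, hz⟩,
          fun hmem => hxz ((mem_neighborFinset G x z).mp hmem)⟩
      exact Finset.card_le_one.mp hsd y hmy z hmz
    by_cases hP : ∃ x ∈ s, ∃ y ∈ s, x ≠ y ∧ ¬ G.Adj x y
    · obtain ⟨x, hx, y, hy, hxy, hnadj⟩ := hP
      set r := (s.erase x).erase y with hr
      have hyex : y ∈ s.erase x := Finset.mem_erase.mpr ⟨hxy.symm, hy⟩
      have hrcard : r.card = 3 := by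
        rw [hr, Finset.card_erase_of_mem hyex, Finset.card_erase_of_mem hx, hdeg]
      have hrmem : ∀ w ∈ r, w ∈ s ∧ w ≠ x ∧ w ≠ y := by
        intro w hw
        rw [hr, Finset.mem_erase, Finset.mem_erase] at hw
        exact ⟨hw.2.2, hw.2.1, hw.1⟩
      have adj_x : ∀ w ∈ r, G.Adj x w := by
        intro w hw
        obtain ⟨hws, hwx, hwy⟩ := hrmem w hw
        by_contra hn
        exact hwy (unique_nonnbr x hx w hws y hy hwx hxy.symm hn hnadj)
      have adj_y : ∀ w ∈ r, G.Adj y w := by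
        intro w hw
        obtain ⟨hws, hwx, hwy⟩ := hrmem w hw
        by_contra hn
        exact hwx (unique_nonnbr y hy w hws x hx hwy hxy (fun h => hn h)
          (fun h => hnadj h.symm))
      by_cases hQ : ∃ p ∈ r, ∃ q ∈ r, p ≠ q ∧ ¬ G.Adj p q
      · obtain ⟨p, hp, q, hq, hpq, hnpq⟩ := hQ
        have hz1 : ({p, q} : Finset α) ⊆ r := by
          intro w hw
          rcases Finset.mem_insert.mp hw with rfl | hw
          · exact hp
          · rw [Finset.mem_singleton] at hw
            exact hw ▸ hq
        have hzcard : (r \ {p, q}).card = 1 := by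
          rw [Finset.card_sdiff_of_subset hz1, hrcard, Finset.card_insert_of_notMem
            (by rw [Finset.mem_singleton]; exact hpq), Finset.card_singleton]
        obtain ⟨z, hzeq⟩ := Finset.card_eq_one.mp hzcard
        have hzmem : z ∈ r \ ({p, q} : Finset α) := by rw [hzeq]; exact Finset.mem_singleton_self z
        rw [Finset.mem_sdiff, Finset.mem_insert, Finset.mem_singleton] at hzmem
        obtain ⟨hzr, hzne⟩ := hzmem
        push_neg at hzne
        obtain ⟨hzp, hzq⟩ := hzne
        obtain ⟨hps, hpx, hpy⟩ := hrmem p hp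
        obtain ⟨hqs, hqx, hqy⟩ := hrmem q hq
        obtain ⟨hzs, hzx, hzy⟩ := hrmem z hzr
        -- p and q are adjacent to everything in r except each other
        have adj_pz : G.Adj p z := by
          by_contra hn
          exact hzq (unique_nonnbr p hps z hzs q hqs hzp hpq.symm hn hnpq)
        have adj_qz : G.Adj q z := by
          by_contra hn
          exact hzp (unique_nonnbr q hqs z hzs p hps hzq hpq
            (fun h => hn h) (fun h => hnpq h.symm))
        -- branch sets : {v}, {x, q}, {y}, {p}, {z}
        refine hasK5_of_five {v} {x, q} {y} {p} {z}
          ⟨v, rfl⟩ ⟨x, Or.inl rfl⟩ ⟨y, rfl⟩ ⟨p, rfl⟩ ⟨z, rfl⟩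
          (induce_connected_singleton G v) (induce_connected_pair (adj_x q hq))
          (induce_connected_singleton G y) (induce_connected_singleton G p)
          (induce_connected_singleton G z)
          (disj_single_pair (hvne x hx) (hvne q hqs))
          (disj_single_single (hvne y hy)) (disj_single_single (hvne p hps))
          (disj_single_single (hvne z hzs))
          (disj_pair_single hxy hqy)
          (disj_pair_single (fun h => hpx h.symm) hpq.symm)
          (disj_pair_single (fun h => hzx h.symm) (fun h => hzq h.symm))
          (disj_single_single (fun h => hpy h.symm))
          (disj_single_single (fun h => hzy h.symm))
          (disj_single_single (fun h => hzp h.symm))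
          ⟨v, rfl, x, Or.inl rfl, hadj_of x hx⟩
          ⟨v, rfl, y, rfl, hadj_of y hy⟩
          ⟨v, rfl, p, rfl, hadj_of p hps⟩
          ⟨v, rfl, z, rfl, hadj_of z hzs⟩
          ⟨q, Or.inr rfl, y, rfl, (adj_y q hq).symm⟩
          ⟨x, Or.inl rfl, p, rfl, adj_x p hp⟩
          ⟨x, Or.inl rfl, z, rfl, adj_x z hzr⟩
          ⟨y, rfl, p, rfl, adj_y p hp⟩
          ⟨y, rfl, z, rfl, adj_y z hzr⟩
          ⟨p, rfl, z, rfl, adj_pz⟩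
      · -- r is a clique
        have adj_r : ∀ w ∈ r, ∀ w' ∈ r, w ≠ w' → G.Adj w w' := by
          intro w hw w' hw' hww
          by_contra hn
          exact hQ ⟨w, hw, w', hw', hww, hn⟩
        obtain ⟨z1, z2, z3, h12, h13, h23, hreq⟩ := Finset.card_eq_three.mp hrcard
        have hz1 : z1 ∈ r := by rw [hreq]; simp
        have hz2 : z2 ∈ r := by rw [hreq]; simp
        have hz3 : z3 ∈ r := by rw [hreq]; simp
        obtain ⟨h1s, h1x, _⟩ := hrmem z1 hz1
        obtain ⟨h2s, h2x, _⟩ := hrmem z2 hz2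
        obtain ⟨h3s, h3x, _⟩ := hrmem z3 hz3
        refine hasK5_of_five {v} {x} {z1} {z2} {z3}
          ⟨v, rfl⟩ ⟨x, rfl⟩ ⟨z1, rfl⟩ ⟨z2, rfl⟩ ⟨z3, rfl⟩
          (induce_connected_singleton G v) (induce_connected_singleton G x)
          (induce_connected_singleton G z1) (induce_connected_singleton G z2)
          (induce_connected_singleton G z3)
          (disj_single_single (hvne x hx)) (disj_single_single (hvne z1 h1s))
          (disj_single_single (hvne z2 h2s)) (disj_single_single (hvne z3 h3s))
          (disj_single_single (fun h => h1x h.symm)) (disj_single_single (fun h => h2x h.symm))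
          (disj_single_single (fun h => h3x h.symm)) (disj_single_single h12)
          (disj_single_single h13) (disj_single_single h23)
          ⟨v, rfl, x, rfl, hadj_of x hx⟩ ⟨v, rfl, z1, rfl, hadj_of z1 h1s⟩
          ⟨v, rfl, z2, rfl, hadj_of z2 h2s⟩ ⟨v, rfl, z3, rfl, hadj_of z3 h3s⟩
          ⟨x, rfl, z1, rfl, adj_x z1 hz1⟩ ⟨x, rfl, z2, rfl, adj_x z2 hz2⟩
          ⟨x, rfl, z3, rfl, adj_x z3 hz3⟩ ⟨z1, rfl, z2, rfl, adj_r z1 hz1 z2 hz2 h12⟩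
          ⟨z1, rfl, z3, rfl, adj_r z1 hz1 z3 hz3 h13⟩ ⟨z2, rfl, z3, rfl, adj_r z2 hz2 z3 hz3 h23⟩
    · -- s is a clique of size 5
      have all_adj : ∀ x ∈ s, ∀ y ∈ s, x ≠ y → G.Adj x y := by
        intro x hx y hy hxy
        by_contra hn
        exact hP ⟨x, hx, y, hy, hxy, hn⟩
      obtain ⟨a, b, c, d, e, hab, hac, had, hae, hbc, hbd, hbe, hcd, hce, hde, hseq⟩ :=
        exists_of_card_eq_five hdeg
      have ha : a ∈ s := by rw [hseq]; simp
      have hb : b ∈ s := by rw [hseq]; simp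
      have hc' : c ∈ s := by rw [hseq]; simp
      have hd : d ∈ s := by rw [hseq]; simp
      refine hasK5_of_five {v} {a} {b} {c} {d}
        ⟨v, rfl⟩ ⟨a, rfl⟩ ⟨b, rfl⟩ ⟨c, rfl⟩ ⟨d, rfl⟩
        (induce_connected_singleton G v) (induce_connected_singleton G a)
        (induce_connected_singleton G b) (induce_connected_singleton G c)
        (induce_connected_singleton G d)
        (disj_single_single (hvne a ha)) (disj_single_single (hvne b hb))
        (disj_single_single (hvne c hc')) (disj_single_single (hvne d hd))
        (disj_single_single hab) (disj_single_single hac) (disj_single_single had)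
        (disj_single_single hbc) (disj_single_single hbd) (disj_single_single hcd)
        ⟨v, rfl, a, rfl, hadj_of a ha⟩ ⟨v, rfl, b, rfl, hadj_of b hb⟩
        ⟨v, rfl, c, rfl, hadj_of c hc'⟩ ⟨v, rfl, d, rfl, hadj_of d hd⟩
        ⟨a, rfl, b, rfl, all_adj a ha b hb hab⟩ ⟨a, rfl, c, rfl, all_adj a ha c hc' hac⟩
        ⟨a, rfl, d, rfl, all_adj a ha d hd had⟩ ⟨b, rfl, c, rfl, all_adj b hb c hc' hbc⟩
        ⟨b, rfl, d, rfl, all_adj b hb d hd hbd⟩ ⟨c, rfl, d, rfl, all_adj c hc' d hd hcd⟩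

end Nbhd
end K4Aux

namespace K4Aux
section NcardVersions
variable {α : Type*} [Fintype α] [DecidableEq α] {G : SimpleGraph α} [DecidableRel G.Adj]

lemma ncard_nbhd_inter (u w : α) :
    (G.neighborSet u ∩ G.neighborSet w).ncard =
      (G.neighborFinset u ∩ G.neighborFinset w).card := by
  rw [← Set.ncard_coe_finset, Finset.coe_inter]
  simp [neighborFinset]

lemma ncard_delete_vertex (v : α) :
    G.edgeSet.ncard ≤ (G.induce {x : α | x ≠ v}).edgeSet.ncard + G.degree v := by
  rw [ncard_edgeSet_eq, ncard_edgeSet_eq]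
  exact card_edgeFinset_delete_vertex v

lemma ncard_contract (huv : G.Adj u v) :
    G.edgeSet.ncard ≤ (contract G u v).edgeSet.ncard + 1 +
      (G.neighborSet u ∩ G.neighborSet v).ncard := by
  rw [ncard_edgeSet_eq, ncard_edgeSet_eq, ncard_nbhd_inter]
  exact card_edgeFinset_contract huv

lemma natCard_compl_vertex (v : α) :
    Nat.card {x : α // x ≠ v} + 1 = Nat.card α := by
  rw [Nat.card_eq_fintype_card, Nat.card_eq_fintype_card]
  exact card_compl_vertex v

lemma ncard_edgeSet_le_choose (G : SimpleGraph α) :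
    G.edgeSet.ncard ≤ (Fintype.card α).choose 2 := by
  classical
  rw [ncard_edgeSet_eq]
  exact card_edgeFinset_le_card_choose_two

lemma adj_of_extremal (G : SimpleGraph α)
    (h : (Fintype.card α).choose 2 ≤ G.edgeSet.ncard) :
    ∀ x y : α, x ≠ y → G.Adj x y := by
  classical
  by_contra hcon
  push_neg at hcon
  obtain ⟨x, y, hxy, hnadj⟩ := hcon
  have hmem : s(x, y) ∈ (⊤ : SimpleGraph α).edgeFinset := by
    rw [mem_edgeFinset, mem_edgeSet]
    exact hxy
  have hsub : G.edgeFinset ⊆ ((⊤ : SimpleGraph α).edgeFinset).erase s(x, y) := by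
    intro e he
    refine Finset.mem_erase.mpr ⟨?_, edgeFinset_mono le_top he⟩
    rintro rfl
    exact hnadj ((mem_edgeSet G).mp (mem_edgeFinset.mp he))
  have h1 : G.edgeFinset.card ≤ (⊤ : SimpleGraph α).edgeFinset.card - 1 := by
    calc G.edgeFinset.card ≤ _ := Finset.card_le_card hsub
      _ = _ := Finset.card_erase_of_mem hmem
  have h2 : 1 ≤ (⊤ : SimpleGraph α).edgeFinset.card := Finset.card_pos.mpr ⟨_, hmem⟩
  have h3 : (⊤ : SimpleGraph α).edgeFinset.card = (Fintype.card α).choose 2 :=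
    card_edgeFinset_top_eq_card_choose_two
  have h4 : G.edgeSet.ncard = G.edgeFinset.card := ncard_edgeSet_eq G
  omega

end NcardVersions

universe u

theorem mader : ∀ (n m : ℕ) {α : Type u} [Fintype α] (G : SimpleGraph α),
    Nat.card α = n → G.edgeSet.ncard = m → 5 ≤ n → 3 * n ≤ m + 5 →
    HasGraphMinor G (⊤ : SimpleGraph (Fin 5)) := by
  intro n
  induction n using Nat.strong_induction_on with
  | _ n IHn =>
  intro m
  induction m using Nat.strong_induction_on with
  | _ m IHm =>
  intro α _ G hn hm h5 hcnt
  classical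
  have hnn : Fintype.card α = n := by rw [← Nat.card_eq_fintype_card, hn]
  by_cases hn5 : n = 5
  · -- complete graph on 5 vertices
    have hchoose : (Fintype.card α).choose 2 = 10 := by rw [hnn, hn5]; rfl
    have hcompl : ∀ x y : α, x ≠ y → G.Adj x y := by
      refine adj_of_extremal G ?_
      omega
    have huniv : (Finset.univ : Finset α).card = 5 := by rw [Finset.card_univ, hnn, hn5]
    obtain ⟨a, b, c, d, e, hab, hac, had, hae, hbc, hbd, hbe, hcd, hce, hde, -⟩ :=
      exists_of_card_eq_five huniv
    exact hasK5_of_five {a} {b} {c} {d} {e}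
      ⟨a, rfl⟩ ⟨b, rfl⟩ ⟨c, rfl⟩ ⟨d, rfl⟩ ⟨e, rfl⟩
      (induce_connected_singleton G a) (induce_connected_singleton G b)
      (induce_connected_singleton G c) (induce_connected_singleton G d)
      (induce_connected_singleton G e)
      (disj_single_single hab) (disj_single_single hac) (disj_single_single had)
      (disj_single_single hae) (disj_single_single hbc) (disj_single_single hbd)
      (disj_single_single hbe) (disj_single_single hcd) (disj_single_single hce)
      (disj_single_single hde)
      ⟨a, rfl, b, rfl, hcompl a b hab⟩ ⟨a, rfl, c, rfl, hcompl a c hac⟩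
      ⟨a, rfl, d, rfl, hcompl a d had⟩ ⟨a, rfl, e, rfl, hcompl a e hae⟩
      ⟨b, rfl, c, rfl, hcompl b c hbc⟩ ⟨b, rfl, d, rfl, hcompl b d hbd⟩
      ⟨b, rfl, e, rfl, hcompl b e hbe⟩ ⟨c, rfl, d, rfl, hcompl c d hcd⟩
      ⟨c, rfl, e, rfl, hcompl c e hce⟩ ⟨d, rfl, e, rfl, hcompl d e hde⟩
  · have h6 : 6 ≤ n := by omega
    by_cases hbig : 3 * n ≤ m + 4
    · -- delete an edge
      have hpos : 0 < G.edgeFinset.card := by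
        have h4 : G.edgeSet.ncard = G.edgeFinset.card := ncard_edgeSet_eq G
        omega
      obtain ⟨ε, hε⟩ := Finset.card_pos.mp hpos
      have hεe : ε ∈ G.edgeSet := mem_edgeFinset.mp hε
      have hdel : (G.deleteEdges {ε}).edgeSet.ncard + 1 = m := by
        rw [← hm]; exact ncard_deleteEdges hεe
      refine minor_mono (deleteEdges_le {ε}) (IHm (m - 1) (by omega) (G.deleteEdges {ε})
        hn (by omega) h5 (by omega))
    · have hexact : m + 5 = 3 * n := by omega
      -- minimum degree and a vertex of small degree
      have hhand : ∑ v, G.degree v = 2 * G.edgeFinset.card :=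
        G.sum_degrees_eq_twice_card_edges
      have hfe : G.edgeSet.ncard = G.edgeFinset.card := ncard_edgeSet_eq G
      have hsmall : ∃ v : α, G.degree v ≤ 5 := by
        by_contra hcon
        push_neg at hcon
        have : (Finset.univ : Finset α).card • 6 ≤ ∑ v, G.degree v :=
          Finset.card_nsmul_le_sum _ _ _ (fun x _ => hcon x)
        rw [Finset.card_univ, hnn] at this
        simp only [smul_eq_mul] at this
        omega
      by_cases hdel : ∃ v : α, G.degree v ≤ 3
      · -- delete a vertex of degree ≤ 3
        obtain ⟨v, hv⟩ := hdel
        have hcard' : Nat.card {x : α // x ≠ v} + 1 = n := by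
          rw [natCard_compl_vertex, hn]
        have hecnt : G.edgeSet.ncard ≤ (G.induce {x : α | x ≠ v}).edgeSet.ncard + G.degree v :=
          ncard_delete_vertex v
        refine minor_of_induce (IHn (n - 1) (by omega) _
          (G.induce {x : α | x ≠ v}) ?_ rfl (by omega) (by omega))
        rw [show Nat.card ↥{x : α | x ≠ v} = Nat.card {x : α // x ≠ v} from rfl]
        omega
      · push_neg at hdel
        by_cases hcon : ∃ u w : α, G.Adj u w ∧ (G.neighborSet u ∩ G.neighborSet w).ncard ≤ 2
        · -- contract an edge
          obtain ⟨u, w, huw, hc2⟩ := hcon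
          have hcard' : Nat.card {x : α // x ≠ w} + 1 = n := by
            rw [natCard_compl_vertex, hn]
          have hecnt := ncard_contract huw
          exact minor_of_contract huw (IHn (n - 1) (by omega) _
            (contract G u w) (by omega) rfl (by omega) (by omega))
        · push_neg at hcon
          obtain ⟨v, hv5⟩ := hsmall
          refine k5_of_dense_nbhd v (hdel v) hv5 ?_
          intro u hu
          rw [← ncard_nbhd_inter]
          exact hcon v u hu

end K4Aux

namespace K4Aux

universe v

theorem main_aux : ∀ (n : ℕ) {α : Type v} [Fintype α] (G : SimpleGraph α) (a b c d : α),
    Nat.card α = n → ¬ HasGraphMinor G (⊤ : SimpleGraph (Fin 5)) →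
    3 * n ≤ G.edgeSet.ncard + 6 →
    a ≠ b → a ≠ c → a ≠ d → b ≠ c → b ≠ d → c ≠ d →
    RootedK4Minor G a b c d := by
  intro n
  induction n using Nat.strong_induction_on with
  | _ n IH =>
  intro α _ G a b c d hn hK5 hcnt hab hac had hbc hbd hcd
  classical
  have hnn : Fintype.card α = n := by rw [← Nat.card_eq_fintype_card, hn]
  set R : Finset α := {a, b, c, d} with hR
  have haR : a ∈ R := by rw [hR]; simp
  have hbR : b ∈ R := by rw [hR]; simp
  have hcR : c ∈ R := by rw [hR]; simp
  have hdR : d ∈ R := by rw [hR]; simp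
  have hRcard : R.card = 4 := by
    rw [hR]
    rw [Finset.card_insert_of_notMem (by simp [hab, hac, had]),
      Finset.card_insert_of_notMem (by simp [hbc, hbd]),
      Finset.card_insert_of_notMem (by simp [hcd]), Finset.card_singleton]
  have hn4 : 4 ≤ n := by
    have := Finset.card_le_univ R
    rw [hRcard, hnn] at this
    omega
  -- Mader's theorem caps the number of edges
  have hexact : G.edgeSet.ncard + 6 = 3 * n := by
    rcases Nat.lt_or_ge (G.edgeSet.ncard + 5) (3 * n) with h | h
    · omega
    · exfalso
      by_cases h5 : 5 ≤ n
      · exact hK5 (mader n G.edgeSet.ncard G hn rfl h5 h)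
      · have hn4' : n = 4 := by omega
        have := ncard_edgeSet_le_choose G
        rw [hnn, hn4'] at this
        have h6 : Nat.choose 4 2 = 6 := rfl
        omega
  by_cases hn4' : n = 4
  · -- the graph is K₄ on the four roots
    have hchoose : (Fintype.card α).choose 2 ≤ G.edgeSet.ncard := by
      rw [hnn, hn4']
      have h6 : Nat.choose 4 2 = 6 := rfl
      omega
    have hadj := adj_of_extremal G hchoose
    exact ⟨{a}, {b}, {c}, {d}, rfl, rfl, rfl, rfl,
      induce_connected_singleton G a, induce_connected_singleton G b,
      induce_connected_singleton G c, induce_connected_singleton G d,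
      disj_single_single hab, disj_single_single hac, disj_single_single had,
      disj_single_single hbc, disj_single_single hbd, disj_single_single hcd,
      ⟨a, rfl, b, rfl, hadj a b hab⟩, ⟨a, rfl, c, rfl, hadj a c hac⟩,
      ⟨a, rfl, d, rfl, hadj a d had⟩, ⟨b, rfl, c, rfl, hadj b c hbc⟩,
      ⟨b, rfl, d, rfl, hadj b d hbd⟩, ⟨c, rfl, d, rfl, hadj c d hcd⟩⟩
  · have hn5 : 5 ≤ n := by omega
    -- a contractible edge not joining two roots
    have hstep : ∀ u w : α, G.Adj u w → w ∉ R →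
        (G.neighborSet u ∩ G.neighborSet w).ncard ≤ 2 → RootedK4Minor G a b c d := by
      intro u w huw hwR hc2
      have haw : a ≠ w := fun h => hwR (h ▸ haR)
      have hbw : b ≠ w := fun h => hwR (h ▸ hbR)
      have hcw : c ≠ w := fun h => hwR (h ▸ hcR)
      have hdw : d ≠ w := fun h => hwR (h ▸ hdR)
      have hcard' : Nat.card {x : α // x ≠ w} + 1 = n := by rw [natCard_compl_vertex, hn]
      have hecnt := ncard_contract huw
      refine rootedK4_of_contract huw haw hbw hcw hdw
        (IH (n - 1) (by omega) (contract G u w) ⟨a, haw⟩ ⟨b, hbw⟩ ⟨c, hcw⟩ ⟨d, hdw⟩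
          (by omega) (fun h => hK5 (minor_of_contract huw h)) (by omega)
          (fun h => hab (congrArg Subtype.val h)) (fun h => hac (congrArg Subtype.val h))
          (fun h => had (congrArg Subtype.val h)) (fun h => hbc (congrArg Subtype.val h))
          (fun h => hbd (congrArg Subtype.val h)) (fun h => hcd (congrArg Subtype.val h)))
    by_cases hgood : ∃ u w : α, G.Adj u w ∧ (u ∉ R ∨ w ∉ R) ∧
        (G.neighborSet u ∩ G.neighborSet w).ncard ≤ 2
    · obtain ⟨u, w, huw, hor, hc2⟩ := hgood
      by_cases hw : w ∈ R
      · have hu : u ∉ R := by tauto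
        refine hstep w u huw.symm hu ?_
        rw [Set.inter_comm]
        exact hc2
      · exact hstep u w huw hw hc2
    · -- dense case : we exhibit the K₄ on the roots directly
      have hdense : ∀ u w : α, G.Adj u w → u ∉ R ∨ w ∉ R →
          3 ≤ (G.neighborSet u ∩ G.neighborSet w).ncard := by
        intro u w h1 h2
        by_contra h3
        exact hgood ⟨u, w, h1, h2, by omega⟩
      have hcommon_le : ∀ r u : α, G.Adj r u →
          (G.neighborFinset r ∩ G.neighborFinset u).card ≤ G.degree r - 1 := by
        intro r u hadj
        have hsub' : G.neighborFinset r ∩ G.neighborFinset u ⊆ (G.neighborFinset r).erase u := by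
          intro x hx
          rw [Finset.mem_inter] at hx
          exact Finset.mem_erase.mpr ⟨((mem_neighborFinset G u x).mp hx.2).ne', hx.1⟩
        calc (G.neighborFinset r ∩ G.neighborFinset u).card
            ≤ ((G.neighborFinset r).erase u).card := Finset.card_le_card hsub'
          _ = G.degree r - 1 := by
              rw [Finset.card_erase_of_mem ((mem_neighborFinset G r u).mpr hadj)]
              rfl
      -- minimum degree at least 3 (via Mader applied to a vertex deletion)
      have hdeg3 : ∀ x : α, 3 ≤ G.degree x := by
        intro x
        by_contra hx
        push_neg at hx
        have hecnt := ncard_delete_vertex (G := G) x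
        have hcard' : Nat.card {y : α // y ≠ x} + 1 = n := by rw [natCard_compl_vertex, hn]
        by_cases h56 : n = 5
        · have hcard4 : Fintype.card {y : α // y ≠ x} = 4 := by
            rw [← Nat.card_eq_fintype_card]; omega
          have := ncard_edgeSet_le_choose (G.induce {y : α | y ≠ x})
          rw [show Fintype.card ↥{y : α | y ≠ x} = Fintype.card {y : α // y ≠ x} from rfl,
            hcard4] at this
          have h6 : Nat.choose 4 2 = 6 := rfl
          omega
        · refine hK5 (minor_of_induce (mader (n - 1) _ (G.induce {y : α | y ≠ x})
            ?_ rfl (by omega) (by omega)))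
          rw [show Nat.card ↥{y : α | y ≠ x} = Nat.card {y : α // y ≠ x} from rfl]
          omega
      -- every non-root vertex has degree at least 6
      have hbigdeg : ∀ x : α, x ∉ R → 6 ≤ G.degree x := by
        intro x hxR
        by_contra h6
        push_neg at h6
        have h3 := hdeg3 x
        by_cases h4 : 4 ≤ G.degree x
        · refine hK5 (k5_of_dense_nbhd x h4 (by omega) ?_)
          intro u hu
          rw [← ncard_nbhd_inter]
          exact hdense x u hu (Or.inl hxR)
        · -- degree exactly 3 : common neighbourhoods are too small
          have hdx : G.degree x = 3 := by omega
          have hpos : 0 < (G.neighborFinset x).card := by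
            rw [← degree]; omega
          obtain ⟨u, hu⟩ := Finset.card_pos.mp hpos
          have hadj : G.Adj x u := (mem_neighborFinset G x u).mp hu
          have := hdense x u hadj (Or.inl hxR)
          rw [ncard_nbhd_inter] at this
          have := hcommon_le x u hadj
          omega
      -- degree count : every root has degree exactly 3
      have hhand : ∑ x, G.degree x = 2 * G.edgeFinset.card := G.sum_degrees_eq_twice_card_edges
      have hfe : G.edgeSet.ncard = G.edgeFinset.card := ncard_edgeSet_eq G
      have hsplit : ∑ x ∈ Finset.univ \ R, G.degree x + ∑ x ∈ R, G.degree x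
          = ∑ x, G.degree x := Finset.sum_sdiff (Finset.subset_univ R)
      have hsumR : ∑ x ∈ R, G.degree x
          = G.degree a + (G.degree b + (G.degree c + G.degree d)) := by
        rw [hR, Finset.sum_insert (by simp [hab, hac, had]),
          Finset.sum_insert (by simp [hbc, hbd]),
          Finset.sum_insert (by simp [hcd]), Finset.sum_singleton]
      have hsumNR : (Finset.univ \ R).card • 6 ≤ ∑ x ∈ Finset.univ \ R, G.degree x := by
        refine Finset.card_nsmul_le_sum _ _ _ ?_
        intro x hx
        exact hbigdeg x (Finset.mem_sdiff.mp hx).2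
      have hcardNR : (Finset.univ \ R).card = n - 4 := by
        rw [Finset.card_sdiff_of_subset (Finset.subset_univ R), Finset.card_univ, hnn, hRcard]
      rw [hcardNR, smul_eq_mul] at hsumNR
      have hda := hdeg3 a
      have hdb := hdeg3 b
      have hdc := hdeg3 c
      have hdd := hdeg3 d
      have hrootdeg : G.degree a = 3 ∧ G.degree b = 3 ∧ G.degree c = 3 ∧ G.degree d = 3 := by
        omega
      -- each root is adjacent to the other three roots
      have key : ∀ r ∈ R, G.degree r = 3 → ∀ r' ∈ R, r ≠ r' → G.Adj r r' := by
        intro r hr hdr r' hr' hne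
        have hsub : G.neighborFinset r ⊆ R.erase r := by
          intro u hu
          have hadj : G.Adj r u := (mem_neighborFinset G r u).mp hu
          refine Finset.mem_erase.mpr ⟨hadj.ne', ?_⟩
          by_contra huR
          have h1 := hdense r u hadj (Or.inr huR)
          rw [ncard_nbhd_inter] at h1
          have h2 := hcommon_le r u hadj
          omega
        have hceq : (R.erase r).card = 3 := by
          rw [Finset.card_erase_of_mem hr, hRcard]
        have heq : G.neighborFinset r = R.erase r :=
          Finset.eq_of_subset_of_card_le hsub (by rw [hceq, ← hdr]; rfl)
        have : r' ∈ G.neighborFinset r := by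
          rw [heq, Finset.mem_erase]
          exact ⟨hne.symm, hr'⟩
        exact (mem_neighborFinset G r r').mp this
      obtain ⟨hda3, hdb3, hdc3, hdd3⟩ := hrootdeg
      exact ⟨{a}, {b}, {c}, {d}, rfl, rfl, rfl, rfl,
        induce_connected_singleton G a, induce_connected_singleton G b,
        induce_connected_singleton G c, induce_connected_singleton G d,
        disj_single_single hab, disj_single_single hac, disj_single_single had,
        disj_single_single hbc, disj_single_single hbd, disj_single_single hcd,
        ⟨a, rfl, b, rfl, key a haR hda3 b hbR hab⟩,
        ⟨a, rfl, c, rfl, key a haR hda3 c hcR hac⟩,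
        ⟨a, rfl, d, rfl, key a haR hda3 d hdR had⟩,
        ⟨b, rfl, c, rfl, key b hbR hdb3 c hcR hbc⟩,
        ⟨b, rfl, d, rfl, key b hbR hdb3 d hdR hbd⟩,
        ⟨c, rfl, d, rfl, key c hcR hdc3 d hdR hcd⟩⟩

end K4Aux


/-- a planar triangulation (edge-maximal planar graph, every face a
triangle) has a `K₄`-minor rooted at every four distinct vertices. -/
theorem planar_triangulation_rooted_K4_minor [Fintype V] (G : SimpleGraph V)
    (hplanar : IsPlanar G) (hcard : 3 ≤ Nat.card V)
    (htri : G.edgeSet.ncard + 6 = 3 * Nat.card V) (a b c d : V)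
    (hab : a ≠ b) (hac : a ≠ c) (had : a ≠ d) (hbc : b ≠ c) (hbd : b ≠ d) (hcd : c ≠ d) :
    RootedK4Minor G a b c d := by
  classical
  exact K4Aux.main_aux (Nat.card V) G a b c d rfl hplanar.1 (by omega) hab hac had hbc hbd hcd
end

section
/- Let H be a graph with distinct vertices a, b, c, d, and let H^+ be any graph obtained from H by attaching, to each triangle T of H, a (possibly empty) clique X_T whose vertices are adjacent to all three vertices of T. Then H^+ contains a K_4-minor rooted at a, b, c, d if and only if H does. -/
open SimpleGraph

variable {V : Type*}

/-- Iterated induce is isomorphic to induce on the image. -/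
noncomputable def induceInduceIso (G : SimpleGraph V) (S : Set V) (A : Set ↥S) :
    (G.induce S).induce A ≃g G.induce (Subtype.val '' A) :=
  { Equiv.Set.image _ A Subtype.val_injective with
    map_rel_iff' := Iff.rfl }

lemma key_reach (G : SimpleGraph V) (S : Set V) (t : V → Finset V)
    (hexp : CliqueExpansion G S t) (A : Set V) :
    ∀ {p q : ↥A} (_ : (G.induce A).Walk p q) (hq : (q : V) ∈ S),
    ∃ p' : ↥(A ∩ S), ((p : V) ∈ S → (p' : V) = ↑p) ∧ ((p : V) ∉ S → (p' : V) ∈ t ↑p) ∧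
      (G.induce (A ∩ S)).Reachable p' ⟨↑q, q.2, hq⟩ := by
  intro p q w
  induction w with
  | @nil u =>
    intro hq
    exact ⟨⟨↑u, u.2, hq⟩, fun _ => rfl, fun h => absurd hq h, Reachable.refl _⟩
  | @cons p m q h w ih =>
    intro hq
    obtain ⟨m', hmS, hmNS, hreach⟩ := ih hq
    have hadj : G.Adj ↑p ↑m := h
    by_cases hpS : (p : V) ∈ S
    · by_cases hmSS : (m : V) ∈ S
      · refine ⟨⟨↑p, p.2, hpS⟩, fun _ => rfl, fun hn => absurd hpS hn, ?_⟩
        have e : (m' : V) = ↑m := hmS hmSS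
        have : (G.induce (A ∩ S)).Adj ⟨↑p, p.2, hpS⟩ m' := by
          show G.Adj ↑p ↑m'
          rw [e]; exact hadj
        exact this.reachable.trans hreach
      · -- p ∈ S, m ∉ S : p ∈ t m, m' ∈ t m
        have hpt : (p : V) ∈ t ↑m := by
          have := ((hexp ↑m hmSS).2.2.2 ↑p).mp hadj.symm
          rcases this with h1 | h2
          · exact h1
          · exact absurd hpS h2.1
        have hm't : (m' : V) ∈ t ↑m := hmNS hmSS
        refine ⟨⟨↑p, p.2, hpS⟩, fun _ => rfl, fun hn => absurd hpS hn, ?_⟩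
        by_cases he : (p : V) = ↑m'
        · have : (⟨↑p, p.2, hpS⟩ : ↥(A ∩ S)) = m' := Subtype.ext he
          rw [this]; exact hreach
        · have : (G.induce (A ∩ S)).Adj ⟨↑p, p.2, hpS⟩ m' := by
            show G.Adj ↑p ↑m'
            exact (hexp ↑m hmSS).2.2.1 _ hpt _ hm't he
          exact this.reachable.trans hreach
    · by_cases hmSS : (m : V) ∈ S
      · -- p ∉ S, m ∈ S : m ∈ t p, take p' = m' (= m)
        have hmt : (m : V) ∈ t ↑p := by
          have := ((hexp ↑p hpS).2.2.2 ↑m).mp hadj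
          rcases this with h1 | h2
          · exact h1
          · exact absurd hmSS h2.1
        refine ⟨m', fun hs => absurd hs hpS, fun _ => ?_, hreach⟩
        rw [hmS hmSS]; exact hmt
      · -- both outside : same clique
        have htt : t ↑m = t ↑p := by
          have := ((hexp ↑p hpS).2.2.2 ↑m).mp hadj
          rcases this with h1 | h2
          · exact absurd ((hexp ↑p hpS).1 h1) hmSS
          · exact h2.2.2
        refine ⟨m', fun hs => absurd hs hpS, fun _ => ?_, hreach⟩
        rw [← htt]; exact hmNS hmSS

lemma attach_pt (G : SimpleGraph V) (S : Set V) (t : V → Finset V)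
    (hexp : CliqueExpansion G S t) (A : Set V) (hconn : (G.induce A).Connected)
    {x r : V} (hx : x ∈ A) (hr : r ∈ A) (hrS : r ∈ S) :
    ∃ p' : ↥(A ∩ S), (x ∈ S → (p' : V) = x) ∧ (x ∉ S → (p' : V) ∈ t x) := by
  obtain ⟨w⟩ := hconn ⟨x, hx⟩ ⟨r, hr⟩
  obtain ⟨p', h1, h2, _⟩ := key_reach G S t hexp A w hrS
  exact ⟨p', h1, h2⟩

lemma conn_inter (G : SimpleGraph V) (S : Set V) (t : V → Finset V)
    (hexp : CliqueExpansion G S t) (A : Set V) (hconn : (G.induce A).Connected)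
    {r : V} (hr : r ∈ A) (hrS : r ∈ S) :
    (G.induce (A ∩ S)).Connected := by
  haveI : Nonempty ↥(A ∩ S) := ⟨⟨r, hr, hrS⟩⟩
  refine ⟨fun u v => ?_⟩
  obtain ⟨w⟩ := hconn ⟨↑u, u.2.1⟩ ⟨↑v, v.2.1⟩
  obtain ⟨p', h1, _, hreach⟩ := key_reach G S t hexp A w v.2.2
  have e1 : p' = u := Subtype.ext (h1 u.2.2)
  have e2 : (⟨(↑v : V), v.2.1, v.2.2⟩ : ↥(A ∩ S)) = v := Subtype.ext rfl
  rw [e1, e2] at hreach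
  exact hreach

/-- Cross-set edge witnesses can be pushed into `S`. -/
lemma edge_witness (G : SimpleGraph V) (S : Set V) (t : V → Finset V)
    (hexp : CliqueExpansion G S t) {A B : Set V}
    (hA : (G.induce A).Connected) (hB : (G.induce B).Connected)
    {rA rB : V} (hrA : rA ∈ A) (hrAS : rA ∈ S) (hrB : rB ∈ B) (hrBS : rB ∈ S)
    (hdis : Disjoint A B) (h : ∃ x ∈ A, ∃ y ∈ B, G.Adj x y) :
    ∃ x ∈ A ∩ S, ∃ y ∈ B ∩ S, G.Adj x y := by
  obtain ⟨x, hx, y, hy, hxy⟩ := h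
  obtain ⟨x', hx1, hx2⟩ := attach_pt G S t hexp A hA hx hrA hrAS
  obtain ⟨y', hy1, hy2⟩ := attach_pt G S t hexp B hB hy hrB hrBS
  have hne : (x' : V) ≠ (y' : V) := fun e => by
    exact (hdis.ne_of_mem x'.2.1 y'.2.1) e
  by_cases hxS : x ∈ S <;> by_cases hyS : y ∈ S
  · refine ⟨x', x'.2, y', y'.2, ?_⟩
    rw [hx1 hxS, hy1 hyS]; exact hxy
  · -- x ∈ S, y ∉ S : x ∈ t y, y' ∈ t y
    have hxt : x ∈ t y := by
      rcases ((hexp y hyS).2.2.2 x).mp hxy.symm with h1 | h2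
      · exact h1
      · exact absurd hxS h2.1
    refine ⟨x', x'.2, y', y'.2, ?_⟩
    rw [hx1 hxS]
    have := (hexp y hyS).2.2.1 x hxt _ (hy2 hyS)
    apply this
    rw [← hx1 hxS]; exact hne
  · have hyt : y ∈ t x := by
      rcases ((hexp x hxS).2.2.2 y).mp hxy with h1 | h2
      · exact h1
      · exact absurd hyS h2.1
    refine ⟨x', x'.2, y', y'.2, ?_⟩
    rw [hy1 hyS]
    have := (hexp x hxS).2.2.1 _ (hx2 hxS) y hyt
    apply this
    rw [← hy1 hyS]; exact fun e => hne e
  · have htt : t y = t x := by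
      rcases ((hexp x hxS).2.2.2 y).mp hxy with h1 | h2
      · exact absurd ((hexp x hxS).1 h1) hyS
      · exact h2.2.2
    refine ⟨x', x'.2, y', y'.2, ?_⟩
    exact (hexp x hxS).2.2.1 _ (hx2 hxS) _ (htt ▸ hy2 hyS) hne


/-- attaching cliques to triangles of `H` does not change whether
there is a `K₄`-minor rooted at `a,b,c,d ∈ V(H)`. -/
theorem cliqueExpansion_rooted_K4_minor_iff (G : SimpleGraph V) (S : Set V)
    (t : V → Finset V) (hexp : CliqueExpansion G S t) (a b c d : V)
    (ha : a ∈ S) (hb : b ∈ S) (hc : c ∈ S) (hd : d ∈ S)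
    (hab : a ≠ b) (hac : a ≠ c) (had : a ≠ d) (hbc : b ≠ c) (hbd : b ≠ d) (hcd : c ≠ d) :
    RootedK4Minor G a b c d ↔
      RootedK4Minor (G.induce S) ⟨a, ha⟩ ⟨b, hb⟩ ⟨c, hc⟩ ⟨d, hd⟩ := by
  constructor
  · rintro ⟨A, B, C, D, haA, hbB, hcC, hdD, cA, cB, cC, cD,
      dAB, dAC, dAD, dBC, dBD, dCD, eAB, eAC, eAD, eBC, eBD, eCD⟩
    refine ⟨Subtype.val ⁻¹' A, Subtype.val ⁻¹' B, Subtype.val ⁻¹' C, Subtype.val ⁻¹' D,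
      haA, hbB, hcC, hdD, ?_, ?_, ?_, ?_,
      Disjoint.preimage _ dAB, Disjoint.preimage _ dAC, Disjoint.preimage _ dAD,
      Disjoint.preimage _ dBC, Disjoint.preimage _ dBD, Disjoint.preimage _ dCD,
      ?_, ?_, ?_, ?_, ?_, ?_⟩
    -- connectivity goals
    · rw [(induceInduceIso G S _).connected_iff, Subtype.image_preimage_coe,
        Set.inter_comm]
      exact conn_inter G S t hexp A cA haA ha
    · rw [(induceInduceIso G S _).connected_iff, Subtype.image_preimage_coe,
        Set.inter_comm]
      exact conn_inter G S t hexp B cB hbB hb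
    · rw [(induceInduceIso G S _).connected_iff, Subtype.image_preimage_coe,
        Set.inter_comm]
      exact conn_inter G S t hexp C cC hcC hc
    · rw [(induceInduceIso G S _).connected_iff, Subtype.image_preimage_coe,
        Set.inter_comm]
      exact conn_inter G S t hexp D cD hdD hd
    -- edge goals
    · obtain ⟨x, hx, y, hy, hxy⟩ := edge_witness G S t hexp cA cB haA ha hbB hb dAB eAB
      exact ⟨⟨x, hx.2⟩, hx.1, ⟨y, hy.2⟩, hy.1, hxy⟩
    · obtain ⟨x, hx, y, hy, hxy⟩ := edge_witness G S t hexp cA cC haA ha hcC hc dAC eAC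
      exact ⟨⟨x, hx.2⟩, hx.1, ⟨y, hy.2⟩, hy.1, hxy⟩
    · obtain ⟨x, hx, y, hy, hxy⟩ := edge_witness G S t hexp cA cD haA ha hdD hd dAD eAD
      exact ⟨⟨x, hx.2⟩, hx.1, ⟨y, hy.2⟩, hy.1, hxy⟩
    · obtain ⟨x, hx, y, hy, hxy⟩ := edge_witness G S t hexp cB cC hbB hb hcC hc dBC eBC
      exact ⟨⟨x, hx.2⟩, hx.1, ⟨y, hy.2⟩, hy.1, hxy⟩
    · obtain ⟨x, hx, y, hy, hxy⟩ := edge_witness G S t hexp cB cD hbB hb hdD hd dBD eBD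
      exact ⟨⟨x, hx.2⟩, hx.1, ⟨y, hy.2⟩, hy.1, hxy⟩
    · obtain ⟨x, hx, y, hy, hxy⟩ := edge_witness G S t hexp cC cD hcC hc hdD hd dCD eCD
      exact ⟨⟨x, hx.2⟩, hx.1, ⟨y, hy.2⟩, hy.1, hxy⟩
  · rintro ⟨A, B, C, D, haA, hbB, hcC, hdD, cA, cB, cC, cD,
      dAB, dAC, dAD, dBC, dBD, dCD, eAB, eAC, eAD, eBC, eBD, eCD⟩
    have inj : Function.Injective (Subtype.val : ↥S → V) := Subtype.val_injective
    refine ⟨Subtype.val '' A, Subtype.val '' B, Subtype.val '' C, Subtype.val '' D,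
      ⟨_, haA, rfl⟩, ⟨_, hbB, rfl⟩, ⟨_, hcC, rfl⟩, ⟨_, hdD, rfl⟩,
      (induceInduceIso G S A).connected_iff.mp cA,
      (induceInduceIso G S B).connected_iff.mp cB,
      (induceInduceIso G S C).connected_iff.mp cC,
      (induceInduceIso G S D).connected_iff.mp cD,
      (Set.disjoint_image_iff inj).mpr dAB, (Set.disjoint_image_iff inj).mpr dAC,
      (Set.disjoint_image_iff inj).mpr dAD, (Set.disjoint_image_iff inj).mpr dBC,
      (Set.disjoint_image_iff inj).mpr dBD, (Set.disjoint_image_iff inj).mpr dCD,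
      ?_, ?_, ?_, ?_, ?_, ?_⟩
    · obtain ⟨x, hx, y, hy, hxy⟩ := eAB
      exact ⟨↑x, ⟨x, hx, rfl⟩, ↑y, ⟨y, hy, rfl⟩, hxy⟩
    · obtain ⟨x, hx, y, hy, hxy⟩ := eAC
      exact ⟨↑x, ⟨x, hx, rfl⟩, ↑y, ⟨y, hy, rfl⟩, hxy⟩
    · obtain ⟨x, hx, y, hy, hxy⟩ := eAD
      exact ⟨↑x, ⟨x, hx, rfl⟩, ↑y, ⟨y, hy, rfl⟩, hxy⟩
    · obtain ⟨x, hx, y, hy, hxy⟩ := eBC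
      exact ⟨↑x, ⟨x, hx, rfl⟩, ↑y, ⟨y, hy, rfl⟩, hxy⟩
    · obtain ⟨x, hx, y, hy, hxy⟩ := eBD
      exact ⟨↑x, ⟨x, hx, rfl⟩, ↑y, ⟨y, hy, rfl⟩, hxy⟩
    · obtain ⟨x, hx, y, hy, hxy⟩ := eCD
      exact ⟨↑x, ⟨x, hx, rfl⟩, ↑y, ⟨y, hy, rfl⟩, hxy⟩
end
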